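/- arXiv:2506.11265 — 4 statements merged into one kernel-verified Lean document; each statement's English description precedes it below -/
import Mathlib

section
/- Assume n ≥ 2 and let t be a lattice point of (n−2)Δ^{d−1}. Suppose j̄_0, j̄_1, …, j̄_ℓ is a path in the tree-linkage graph G(t), where for each 0 ≤ k ≤ ℓ−1 the edge between j̄_k and j̄_{k+1} has near label i_k at j̄_k and near label i'_{k+1} at j̄_{k+1}. Then: (a) for each 0 ≤ k ≤ ℓ−1, in the forest 𝕋(t+e_{j̄_k}) ∖ {(i_k, j̄_k)}, the vertices j̄_0, …, j̄_k lie in a different connected component from the vertices j̄_{k+1}, …, j̄_ℓ; (b) for all 1 ≤ k ≤ k' ≤ ℓ−1, i'_k ≠ i_{k'}; (c) if (i, j̄_k) ∈ T_t = ⋂_{j̄∈[d̄]} 𝕋(t+e_j̄) for some 0 ≤ k ≤ ℓ and i ∈ [n], then i_{k'} ≠ i for all k' ≥ k and i'_{k'} ≠ i for all k' ≤ k. -/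
open Finset

/-- A bipartite graph between `α` and `β`, identified with its edge set. -/
abbrev BGraph (α β : Type*) := Finset (α × β)

section BipartiteDefs

variable {α β : Type*} [DecidableEq α] [DecidableEq β]

/-- Left degree vector. -/
def LD (G : BGraph α β) (a : α) : ℕ := (G.filter fun e => e.1 = a).card

/-- Right degree vector. -/
def RD (G : BGraph α β) (b : β) : ℕ := (G.filter fun e => e.2 = b).card

/-- The simple graph on `α ⊕ β` associated to a bipartite edge set. -/
def toGraph (G : BGraph α β) : SimpleGraph (α ⊕ β) :=
  SimpleGraph.fromRel fun x y => ∃ a b, x = Sum.inl a ∧ y = Sum.inr b ∧ (a, b) ∈ G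

/-- Acyclicity of a bipartite edge set. -/
def Acyclic (G : BGraph α β) : Prop := (toGraph G).IsAcyclic

/-- `U` is a tree on the vertex set `I ⊔ J`. -/
def IsTreeOn (U : BGraph α β) (I : Finset α) (J : Finset β) : Prop :=
  (∀ e ∈ U, e.1 ∈ I ∧ e.2 ∈ J) ∧ Acyclic U ∧
    ∀ x y : α ⊕ β, Sum.elim (· ∈ I) (· ∈ J) x → Sum.elim (· ∈ I) (· ∈ J) y →
      (toGraph U).Reachable x y

/-- `M` is a perfect matching between `I` and `J`. -/
def IsMatching (M : BGraph α β) (I : Finset α) (J : Finset β) : Prop :=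
  (∀ e ∈ M, e.1 ∈ I ∧ e.2 ∈ J) ∧ (∀ a ∈ I, ∃! b : β, (a, b) ∈ M) ∧
    ∀ b ∈ J, ∃! a : α, (a, b) ∈ M

/-- Compatibility of two bipartite graphs. -/
def Compatible (G G' : BGraph α β) : Prop :=
  ∀ (I : Finset α) (J : Finset β) (M M' : BGraph α β),
    M ⊆ G → M' ⊆ G' → IsMatching M I J → IsMatching M' I J → M = M'

end BipartiteDefs

section TopeDefs

variable {n d : ℕ}

/-- The graph of a tope `T : [n] → [d]`. -/
def topeGraph (T : Fin n → Fin d) : BGraph (Fin n) (Fin d) :=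
  Finset.univ.image fun i => (i, T i)

/-- The position (right degree vector) of a tope. -/
def topePos (T : Fin n → Fin d) : Fin d → ℕ :=
  fun j => (Finset.univ.filter fun i => T i = j).card

/-- Standard unit vector `e_j`. -/
def unitVec (j : Fin d) : Fin d → ℕ := fun k => if k = j then 1 else 0

end TopeDefs

/-- Two edge sets differ in exactly one edge. -/
def diffOne {α β : Type*} [DecidableEq α] [DecidableEq β] (A B : BGraph α β) : Prop :=
  (A \ B).card = 1 ∧ (B \ A).card = 1

/-- The tree-linkage graph `G(t)` on the vertex set `[d]`. -/
def TLGraph {n d : ℕ} (Tr : (Fin d → ℕ) → BGraph (Fin n) (Fin d)) (t : Fin d → ℕ) :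
    SimpleGraph (Fin d) :=
  SimpleGraph.fromRel fun j j' => diffOne (Tr (t + unitVec j)) (Tr (t + unitVec j'))

/-- The intersection `T_t` of the trees at positions `t + e_j`, `j ∈ [d]`. -/
def interTree {n d : ℕ} (Tr : (Fin d → ℕ) → BGraph (Fin n) (Fin d)) (t : Fin d → ℕ) :
    BGraph (Fin n) (Fin d) :=
  Finset.univ.filter fun e => ∀ j : Fin d, e ∈ Tr (t + unitVec j)

section Lemmas
set_option linter.unusedSectionVars false

variable {α β : Type*} [DecidableEq α] [DecidableEq β]

@[simp] lemma toGraph_adj_lr {F : BGraph α β} {a : α} {b : β} :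
    (toGraph F).Adj (Sum.inl a) (Sum.inr b) ↔ (a, b) ∈ F := by
  simp [toGraph, SimpleGraph.fromRel_adj]

@[simp] lemma toGraph_adj_rl {F : BGraph α β} {a : α} {b : β} :
    (toGraph F).Adj (Sum.inr b) (Sum.inl a) ↔ (a, b) ∈ F := by
  simp [toGraph, SimpleGraph.fromRel_adj]

@[simp] lemma toGraph_adj_ll {F : BGraph α β} {a a' : α} :
    ¬ (toGraph F).Adj (Sum.inl a) (Sum.inl a') := by
  simp [toGraph, SimpleGraph.fromRel_adj]

@[simp] lemma toGraph_adj_rr {F : BGraph α β} {b b' : β} :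
    ¬ (toGraph F).Adj (Sum.inr b) (Sum.inr b') := by
  simp [toGraph, SimpleGraph.fromRel_adj]

lemma toGraph_mono {F F' : BGraph α β} (h : F ⊆ F') : toGraph F ≤ toGraph F' := by
  intro x y hxy
  cases x with
  | inl a => cases y with
    | inl a' => exact absurd hxy toGraph_adj_ll
    | inr b => exact toGraph_adj_lr.2 (h (toGraph_adj_lr.1 hxy))
  | inr b => cases y with
    | inl a' => exact toGraph_adj_rl.2 (h (toGraph_adj_rl.1 hxy))
    | inr b' => exact absurd hxy toGraph_adj_rr

lemma adj_inl_right {F : BGraph α β} {a : α} {y : α ⊕ β} (h : (toGraph F).Adj (Sum.inl a) y) :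
    ∃ b, y = Sum.inr b ∧ (a, b) ∈ F := by
  cases y with
  | inl a' => exact absurd h toGraph_adj_ll
  | inr b => exact ⟨b, rfl, toGraph_adj_lr.1 h⟩

lemma adj_inr_right {F : BGraph α β} {b : β} {y : α ⊕ β} (h : (toGraph F).Adj (Sum.inr b) y) :
    ∃ a, y = Sum.inl a ∧ (a, b) ∈ F := by
  cases y with
  | inl a => exact ⟨a, rfl, toGraph_adj_rl.1 h⟩
  | inr b' => exact absurd h toGraph_adj_rr

end Lemmas

section MatchLemmas
set_option linter.unusedSectionVars false
variable {α β : Type*} [DecidableEq α] [DecidableEq β]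

lemma isMatching_empty : IsMatching (∅ : BGraph α β) ∅ ∅ := by
  refine ⟨?_, ?_, ?_⟩ <;> simp

lemma IsMatching.insertPair {M : BGraph α β} {I : Finset α} {J : Finset β}
    (hM : IsMatching M I J) {a : α} {b : β} (ha : a ∉ I) (hb : b ∉ J) :
    IsMatching (insert (a, b) M) (insert a I) (insert b J) := by
  obtain ⟨h1, h2, h3⟩ := hM
  refine ⟨?_, ?_, ?_⟩
  · rintro e he
    rcases Finset.mem_insert.1 he with rfl | he
    · exact ⟨Finset.mem_insert_self _ _, Finset.mem_insert_self _ _⟩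
    · exact ⟨Finset.mem_insert_of_mem (h1 e he).1, Finset.mem_insert_of_mem (h1 e he).2⟩
  · intro x hx
    rcases Finset.mem_insert.1 hx with rfl | hx
    · refine ⟨b, Finset.mem_insert_self _ _, ?_⟩
      intro y hy
      rcases Finset.mem_insert.1 hy with h | h
      · exact (Prod.mk.injEq .. ▸ h).2
      · exact absurd (h1 _ h).1 ha
    · obtain ⟨y, hy, hyu⟩ := h2 x hx
      refine ⟨y, Finset.mem_insert_of_mem hy, ?_⟩
      intro z hz
      rcases Finset.mem_insert.1 hz with h | h
      · have hx' : x = a ∧ z = b := by simpa using h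
        exact absurd (hx'.1 ▸ hx) ha
      · exact hyu z h
  · intro y hy
    rcases Finset.mem_insert.1 hy with rfl | hy
    · refine ⟨a, Finset.mem_insert_self _ _, ?_⟩
      intro x hx
      rcases Finset.mem_insert.1 hx with h | h
      · exact (Prod.mk.injEq .. ▸ h).1
      · exact absurd (h1 _ h).2 hb
    · obtain ⟨x, hx, hxu⟩ := h3 y hy
      refine ⟨x, Finset.mem_insert_of_mem hx, ?_⟩
      intro z hz
      rcases Finset.mem_insert.1 hz with h | h
      · have hy' : z = a ∧ y = b := by simpa using h
        exact absurd (hy'.2 ▸ hy) hb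
      · exact hxu z h

lemma IsMatching.union {M M' : BGraph α β} {I I' : Finset α} {J J' : Finset β}
    (hM : IsMatching M I J) (hM' : IsMatching M' I' J')
    (hI : Disjoint I I') (hJ : Disjoint J J') :
    IsMatching (M ∪ M') (I ∪ I') (J ∪ J') := by
  obtain ⟨h1, h2, h3⟩ := hM
  obtain ⟨h1', h2', h3'⟩ := hM'
  refine ⟨?_, ?_, ?_⟩
  · rintro e he
    rcases Finset.mem_union.1 he with he | he
    · exact ⟨Finset.mem_union_left _ (h1 e he).1, Finset.mem_union_left _ (h1 e he).2⟩
    · exact ⟨Finset.mem_union_right _ (h1' e he).1, Finset.mem_union_right _ (h1' e he).2⟩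
  · intro x hx
    rcases Finset.mem_union.1 hx with hx | hx
    · obtain ⟨y, hy, hyu⟩ := h2 x hx
      refine ⟨y, Finset.mem_union_left _ hy, ?_⟩
      intro z hz
      rcases Finset.mem_union.1 hz with h | h
      · exact hyu z h
      · exact absurd (h1' _ h).1 (Finset.disjoint_left.1 hI hx)
    · obtain ⟨y, hy, hyu⟩ := h2' x hx
      refine ⟨y, Finset.mem_union_right _ hy, ?_⟩
      intro z hz
      rcases Finset.mem_union.1 hz with h | h
      · exact absurd (h1 _ h).1 (Finset.disjoint_right.1 hI hx)
      · exact hyu z h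
  · intro y hy
    rcases Finset.mem_union.1 hy with hy | hy
    · obtain ⟨x, hx, hxu⟩ := h3 y hy
      refine ⟨x, Finset.mem_union_left _ hx, ?_⟩
      intro z hz
      rcases Finset.mem_union.1 hz with h | h
      · exact hxu z h
      · exact absurd (h1' _ h).2 (Finset.disjoint_left.1 hJ hy)
    · obtain ⟨x, hx, hxu⟩ := h3' y hy
      refine ⟨x, Finset.mem_union_right _ hx, ?_⟩
      intro z hz
      rcases Finset.mem_union.1 hz with h | h
      · exact absurd (h1 _ h).2 (Finset.disjoint_right.1 hJ hy)
      · exact hxu z h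

end MatchLemmas

section WalkLemmas
set_option linter.unusedSectionVars false
variable {α β : Type*} [DecidableEq α] [DecidableEq β]

lemma walkRR (F : BGraph α β) :
    ∀ (N : ℕ) {b b' : β} (p : (toGraph F).Walk (Sum.inr b) (Sum.inr b')),
      p.length ≤ N → p.IsPath →
      ∃ (M1 M2 : BGraph α β) (A : Finset α) (J : Finset β),
        M1 ⊆ F ∧ M2 ⊆ F ∧
        IsMatching M1 A (J.erase b') ∧ IsMatching M2 A (J.erase b) ∧
        (∀ x, x ∈ A ↔ Sum.inl x ∈ p.support) ∧
        (∀ x, x ∈ J ↔ Sum.inr x ∈ p.support) := by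
  intro N
  induction N using Nat.strong_induction_on with
  | _ N IH =>
    intro b b' p hlen hp
    cases p with
    | nil =>
      refine ⟨∅, ∅, ∅, {b}, by simp, by simp, ?_, ?_, by simp, by simp⟩
      · simpa using (isMatching_empty : IsMatching (∅ : BGraph α β) ∅ ∅)
      · simpa using (isMatching_empty : IsMatching (∅ : BGraph α β) ∅ ∅)
    | cons h q =>
      obtain ⟨a, rfl, hab⟩ := adj_inr_right h
      cases q with
      | cons h' q' =>
        rename_i x
        obtain ⟨b1, rfl, hab1⟩ := adj_inl_right h'
        rw [SimpleGraph.Walk.cons_isPath_iff] at hp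
        obtain ⟨hp1, hb⟩ := hp
        rw [SimpleGraph.Walk.cons_isPath_iff] at hp1
        obtain ⟨hq', ha⟩ := hp1
        have hlen' : q'.length < N := by
          simp only [SimpleGraph.Walk.length_cons] at hlen; omega
        obtain ⟨M1', M2', A', J', hs1, hs2, hm1, hm2, hA', hJ'⟩ :=
          IH q'.length hlen' q' le_rfl hq'
        have hb'J : b' ∈ J' := (hJ' b').2 q'.end_mem_support
        have hb1J : b1 ∈ J' := (hJ' b1).2 q'.start_mem_support
        have hbJ : b ∉ J' := by
          intro hmem
          exact hb (by simp [SimpleGraph.Walk.support_cons, (hJ' b).1 hmem])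
        have haA : a ∉ A' := fun hmem => ha ((hA' a).1 hmem)
        have hbb' : b ≠ b' := fun hh => hbJ (hh ▸ hb'J)
        refine ⟨insert (a, b) M1', insert (a, b1) M2', insert a A', insert b J',
          Finset.insert_subset hab hs1, Finset.insert_subset hab1 hs2, ?_, ?_, ?_, ?_⟩
        · rw [Finset.erase_insert_of_ne hbb']
          exact hm1.insertPair haA (fun hmem => hbJ (Finset.mem_of_mem_erase hmem))
        · rw [Finset.erase_insert hbJ]
          have := hm2.insertPair (a := a) (b := b1) haA (Finset.notMem_erase _ _)
          rwa [Finset.insert_erase hb1J] at this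
        · intro x
          simp only [Finset.mem_insert, hA' x, SimpleGraph.Walk.support_cons, List.mem_cons]
          constructor
          · rintro (rfl | hx)
            · exact Or.inr (Or.inl rfl)
            · exact Or.inr (Or.inr hx)
          · rintro (hx | hx | hx)
            · exact absurd hx (by simp)
            · exact Or.inl (by simpa using hx)
            · exact Or.inr hx
        · intro x
          simp only [Finset.mem_insert, hJ' x, SimpleGraph.Walk.support_cons, List.mem_cons]
          constructor
          · rintro (rfl | hx)
            · exact Or.inl rfl
            · exact Or.inr (Or.inr hx)
          · rintro (hx | hx | hx)
            · exact Or.inl (by simpa using hx)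
            · exact absurd hx (by simp)
            · exact Or.inr hx

lemma walkLL (F : BGraph α β) :
    ∀ (N : ℕ) {a a' : α} (p : (toGraph F).Walk (Sum.inl a) (Sum.inl a')),
      p.length ≤ N → p.IsPath →
      ∃ (M1 M2 : BGraph α β) (A : Finset α) (B : Finset β),
        M1 ⊆ F ∧ M2 ⊆ F ∧
        IsMatching M1 (A.erase a') B ∧ IsMatching M2 (A.erase a) B ∧
        (∀ x, x ∈ A ↔ Sum.inl x ∈ p.support) ∧
        (∀ x, x ∈ B ↔ Sum.inr x ∈ p.support) := by
  intro N
  induction N using Nat.strong_induction_on with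
  | _ N IH =>
    intro a a' p hlen hp
    cases p with
    | nil =>
      refine ⟨∅, ∅, {a}, ∅, by simp, by simp, ?_, ?_, by simp, by simp⟩
      · simpa using (isMatching_empty : IsMatching (∅ : BGraph α β) ∅ ∅)
      · simpa using (isMatching_empty : IsMatching (∅ : BGraph α β) ∅ ∅)
    | cons h q =>
      obtain ⟨b1, rfl, hab⟩ := adj_inl_right h
      cases q with
      | cons h' q' =>
        obtain ⟨a1, rfl, hab1⟩ := adj_inr_right h'
        rw [SimpleGraph.Walk.cons_isPath_iff] at hp
        obtain ⟨hp1, ha⟩ := hp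
        rw [SimpleGraph.Walk.cons_isPath_iff] at hp1
        obtain ⟨hq', hb⟩ := hp1
        have hlen' : q'.length < N := by
          simp only [SimpleGraph.Walk.length_cons] at hlen; omega
        obtain ⟨M1', M2', A', B', hs1, hs2, hm1, hm2, hA', hB'⟩ :=
          IH q'.length hlen' q' le_rfl hq'
        have ha'A : a' ∈ A' := (hA' a').2 q'.end_mem_support
        have ha1A : a1 ∈ A' := (hA' a1).2 q'.start_mem_support
        have haA : a ∉ A' := by
          intro hmem
          exact ha (by simp [SimpleGraph.Walk.support_cons, (hA' a).1 hmem])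
        have hbB : b1 ∉ B' := fun hmem => hb ((hB' b1).1 hmem)
        have haa' : a ≠ a' := fun hh => haA (hh ▸ ha'A)
        refine ⟨insert (a, b1) M1', insert (a1, b1) M2', insert a A', insert b1 B',
          Finset.insert_subset hab hs1, Finset.insert_subset hab1 hs2, ?_, ?_, ?_, ?_⟩
        · rw [Finset.erase_insert_of_ne haa']
          exact hm1.insertPair (fun hmem => haA (Finset.mem_of_mem_erase hmem)) hbB
        · rw [Finset.erase_insert haA]
          have := hm2.insertPair (a := a1) (b := b1) (Finset.notMem_erase _ _) hbB
          rwa [Finset.insert_erase ha1A] at this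
        · intro x
          simp only [Finset.mem_insert, hA' x, SimpleGraph.Walk.support_cons, List.mem_cons]
          constructor
          · rintro (rfl | hx)
            · exact Or.inl rfl
            · exact Or.inr (Or.inr hx)
          · rintro (hx | hx | hx)
            · exact Or.inl (by simpa using hx)
            · exact absurd hx (by simp)
            · exact Or.inr hx
        · intro x
          simp only [Finset.mem_insert, hB' x, SimpleGraph.Walk.support_cons, List.mem_cons]
          constructor
          · rintro (rfl | hx)
            · exact Or.inr (Or.inl rfl)
            · exact Or.inr (Or.inr hx)
          · rintro (hx | hx | hx)
            · exact absurd hx (by simp)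
            · exact Or.inl (by simpa using hx)
            · exact Or.inr hx

end WalkLemmas

section ReachLemmas
set_option linter.unusedSectionVars false
variable {α β : Type*} [DecidableEq α] [DecidableEq β]

lemma reach_of_mem_support {G : SimpleGraph (α ⊕ β)} {v w u : α ⊕ β}
    (p : G.Walk v w) (hu : u ∈ p.support) : G.Reachable v u :=
  ⟨p.takeUntil u hu⟩

lemma reach_mono {F F' : BGraph α β} (h : F ⊆ F') {x y : α ⊕ β}
    (hr : (toGraph F).Reachable x y) : (toGraph F').Reachable x y :=
  SimpleGraph.Reachable.mono (toGraph_mono h) hr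

lemma not_reach_erase {T : BGraph α β} (hT : Acyclic T) {e : α × β} (he : e ∈ T) :
    ¬ (toGraph (T.erase e)).Reachable (Sum.inl e.1) (Sum.inr e.2) := by
  intro hr
  obtain ⟨p0⟩ := hr
  obtain ⟨p, hp⟩ := p0.toPath
  have hedges : ∀ ε ∈ p.edges, ε ∈ (toGraph T).edgeSet := fun ε hε =>
    SimpleGraph.edgeSet_mono (toGraph_mono (Finset.erase_subset _ _))
      (p.edges_subset_edgeSet hε)
  have hadj : (toGraph T).Adj (Sum.inr e.2) (Sum.inl e.1) := toGraph_adj_rl.2 (by simpa using he)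
  have hcyc : (SimpleGraph.Walk.cons hadj (p.transfer (toGraph T) hedges)).IsCycle := by
    rw [SimpleGraph.Walk.cons_isCycle_iff]
    refine ⟨hp.transfer _, ?_⟩
    intro hmem
    rw [SimpleGraph.Walk.edges_transfer] at hmem
    have h2 := p.edges_subset_edgeSet hmem
    rw [SimpleGraph.mem_edgeSet] at h2
    have : (e.1, e.2) ∈ T.erase e := toGraph_adj_rl.1 h2
    simp at this
  exact hT _ hcyc

lemma adj_not_erase {T : BGraph α β} {e : α × β} {v x : α ⊕ β}
    (h : (toGraph T).Adj v x) (h' : ¬ (toGraph (T.erase e)).Adj v x) :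
    (v = Sum.inl e.1 ∧ x = Sum.inr e.2) ∨ (v = Sum.inr e.2 ∧ x = Sum.inl e.1) := by
  cases v with
  | inl a =>
    cases x with
    | inl a' => exact absurd h toGraph_adj_ll
    | inr b =>
      rw [toGraph_adj_lr] at h
      rw [toGraph_adj_lr, Finset.mem_erase] at h'
      have : (a, b) = e := by
        by_contra hne
        exact h' ⟨hne, h⟩
      exact Or.inl ⟨by rw [← this], by rw [← this]⟩
  | inr b =>
    cases x with
    | inl a =>
      rw [toGraph_adj_rl] at h
      rw [toGraph_adj_rl, Finset.mem_erase] at h'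
      have : (a, b) = e := by
        by_contra hne
        exact h' ⟨hne, h⟩
      exact Or.inr ⟨by rw [← this], by rw [← this]⟩
    | inr b' => exact absurd h toGraph_adj_rr

lemma reach_split {T : BGraph α β} {e : α × β} :
    ∀ {v w : α ⊕ β} (_ : (toGraph T).Walk v w),
      (toGraph (T.erase e)).Reachable v (Sum.inl e.1) ∨
      (toGraph (T.erase e)).Reachable v (Sum.inr e.2) ∨
      (toGraph (T.erase e)).Reachable v w := by
  intro v w p
  induction p with
  | nil => exact Or.inr (Or.inr (SimpleGraph.Reachable.refl _))
  | @cons v x w h q IH =>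
    by_cases hadj : (toGraph (T.erase e)).Adj v x
    · rcases IH with h1 | h1 | h1
      · exact Or.inl (hadj.reachable.trans h1)
      · exact Or.inr (Or.inl (hadj.reachable.trans h1))
      · exact Or.inr (Or.inr (hadj.reachable.trans h1))
    · rcases adj_not_erase h hadj with ⟨rfl, _⟩ | ⟨rfl, _⟩
      · exact Or.inl (SimpleGraph.Reachable.refl _)
      · exact Or.inr (Or.inl (SimpleGraph.Reachable.refl _))

end ReachLemmas

section KeyLemma
set_option linter.unusedSectionVars false
variable {α β : Type*} [DecidableEq α] [DecidableEq β]

lemma key {T T' : BGraph α β}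
    (hT : Acyclic T) (hT' : Acyclic T')
    (hconn : ∀ x y : α ⊕ β, (toGraph T).Reachable x y)
    (hcomp : Compatible T T')
    {e e' : α × β} (he : e ∈ T) (heT' : e ∉ T') (he' : e' ∈ T') (he'T : e' ∉ T)
    (hF : T.erase e = T'.erase e') :
    ¬ (toGraph (T.erase e)).Reachable (Sum.inr e.2) (Sum.inr e'.2) := by
  intro hr
  set F := T.erase e with hFdef
  have hsubT : F ⊆ T := Finset.erase_subset _ _
  have hsubT' : F ⊆ T' := by rw [hF]; exact Finset.erase_subset _ _
  have nr1 : ¬ (toGraph F).Reachable (Sum.inl e.1) (Sum.inr e.2) := not_reach_erase hT he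
  have nr2 : ¬ (toGraph F).Reachable (Sum.inl e'.1) (Sum.inr e'.2) := by
    rw [hF]; exact not_reach_erase hT' he'
  -- e'.1 is connected to e.1 in F
  obtain ⟨w⟩ := hconn (Sum.inl e'.1) (Sum.inr e.2)
  have hQr : (toGraph F).Reachable (Sum.inl e'.1) (Sum.inl e.1) := by
    rcases reach_split (e := e) w with h1 | h1 | h1
    · exact h1
    · exact absurd (h1.trans hr) nr2
    · exact absurd (h1.trans hr) nr2
  obtain ⟨P, hpP⟩ := SimpleGraph.Walk.toPath (Classical.choice hr)
  obtain ⟨Q, hpQ⟩ := SimpleGraph.Walk.toPath (Classical.choice hQr)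
  obtain ⟨M1, M2, A, J, hs1, hs2, hm1, hm2, hA, hJ⟩ := walkRR F P.length P le_rfl hpP
  obtain ⟨N1, N2, AQ, BQ, ht1, ht2, hn1, hn2, hAQ, hBQ⟩ := walkLL F Q.length Q le_rfl hpQ
  -- membership facts
  have e1AQ : e.1 ∈ AQ := (hAQ e.1).2 Q.end_mem_support
  have e'1AQ : e'.1 ∈ AQ := (hAQ e'.1).2 Q.start_mem_support
  have e2J : e.2 ∈ J := (hJ e.2).2 P.start_mem_support
  have e'2J : e'.2 ∈ J := (hJ e'.2).2 P.end_mem_support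
  -- disjointness
  have hreachP : ∀ u ∈ P.support, (toGraph F).Reachable (Sum.inr e.2) u :=
    fun u hu => reach_of_mem_support P hu
  have hreachQ : ∀ u ∈ Q.support, (toGraph F).Reachable (Sum.inl e'.1) u :=
    fun u hu => reach_of_mem_support Q hu
  have hcross : ∀ u : α ⊕ β, u ∈ P.support → u ∈ Q.support → False := by
    intro u hP hQ
    exact nr2 (((hreachQ u hQ).trans (hreachP u hP).symm).trans hr)
  have hdisjA : Disjoint A AQ := by
    rw [Finset.disjoint_left]
    intro x hx hx'
    exact hcross _ ((hA x).1 hx) ((hAQ x).1 hx')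
  have hdisjJ : Disjoint J BQ := by
    rw [Finset.disjoint_left]
    intro x hx hx'
    exact hcross _ ((hJ x).1 hx) ((hBQ x).1 hx')
  -- build the two matchings
  have hbig : IsMatching (M2 ∪ N1) (A ∪ AQ.erase e.1) (J.erase e.2 ∪ BQ) :=
    hm2.union hn1 (hdisjA.mono_right (Finset.erase_subset _ _))
      (hdisjJ.mono_left (Finset.erase_subset _ _))
  have hbig' : IsMatching (M1 ∪ N2) (A ∪ AQ.erase e'.1) (J.erase e'.2 ∪ BQ) :=
    hm1.union hn2 (hdisjA.mono_right (Finset.erase_subset _ _))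
      (hdisjJ.mono_left (Finset.erase_subset _ _))
  have hMbig : IsMatching (insert (e.1, e.2) (M2 ∪ N1)) (A ∪ AQ) (J ∪ BQ) := by
    have h1 : e.1 ∉ A ∪ AQ.erase e.1 := by
      rw [Finset.mem_union]
      rintro (h | h)
      · exact Finset.disjoint_left.1 hdisjA h e1AQ
      · exact Finset.notMem_erase _ _ h
    have h2 : e.2 ∉ J.erase e.2 ∪ BQ := by
      rw [Finset.mem_union]
      rintro (h | h)
      · exact Finset.notMem_erase _ _ h
      · exact Finset.disjoint_left.1 hdisjJ e2J h
    have := hbig.insertPair h1 h2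
    rwa [show insert e.1 (A ∪ AQ.erase e.1) = A ∪ AQ by
        rw [← Finset.union_insert, Finset.insert_erase e1AQ],
      show insert e.2 (J.erase e.2 ∪ BQ) = J ∪ BQ by
        rw [← Finset.insert_union, Finset.insert_erase e2J]] at this
  have hMbig' : IsMatching (insert (e'.1, e'.2) (M1 ∪ N2)) (A ∪ AQ) (J ∪ BQ) := by
    have h1 : e'.1 ∉ A ∪ AQ.erase e'.1 := by
      rw [Finset.mem_union]
      rintro (h | h)
      · exact Finset.disjoint_left.1 hdisjA h e'1AQ
      · exact Finset.notMem_erase _ _ h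
    have h2 : e'.2 ∉ J.erase e'.2 ∪ BQ := by
      rw [Finset.mem_union]
      rintro (h | h)
      · exact Finset.notMem_erase _ _ h
      · exact Finset.disjoint_left.1 hdisjJ e'2J h
    have := hbig'.insertPair h1 h2
    rwa [show insert e'.1 (A ∪ AQ.erase e'.1) = A ∪ AQ by
        rw [← Finset.union_insert, Finset.insert_erase e'1AQ],
      show insert e'.2 (J.erase e'.2 ∪ BQ) = J ∪ BQ by
        rw [← Finset.insert_union, Finset.insert_erase e'2J]] at this
  have hsub1 : insert (e.1, e.2) (M2 ∪ N1) ⊆ T := by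
    refine Finset.insert_subset (by simpa using he) (Finset.union_subset ?_ ?_)
    · exact hs2.trans hsubT
    · exact ht1.trans hsubT
  have hsub2 : insert (e'.1, e'.2) (M1 ∪ N2) ⊆ T' := by
    refine Finset.insert_subset (by simpa using he') (Finset.union_subset ?_ ?_)
    · exact hs1.trans hsubT'
    · exact ht2.trans hsubT'
  have heq := hcomp (A ∪ AQ) (J ∪ BQ) _ _ hsub1 hsub2 hMbig hMbig'
  exact heT' (by simpa using hsub2 (heq ▸ Finset.mem_insert_self (e.1, e.2) (M2 ∪ N1)))

end KeyLemma

section MainLemmas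
set_option linter.unusedSectionVars false
set_option maxHeartbeats 1000000
variable {n d : ℕ}

lemma hu_of_ht {t : Fin d → ℕ} (ht : (∑ x, t x) + 2 = n) (c : Fin d) :
    (∑ x, (t + unitVec c) x) + 1 = n := by
  have h1 : ∑ x, (t + unitVec c) x = (∑ x, t x) + ∑ x, unitVec c x := by
    simp [Finset.sum_add_distrib]
  have h2 : ∑ x, unitVec c x = 1 := by simp [unitVec]
  omega

lemma conn_of_tree {U : BGraph (Fin n) (Fin d)} (h : IsTreeOn U Finset.univ Finset.univ) :
    ∀ x y, (toGraph U).Reachable x y :=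
  fun x y => h.2.2 x y (by cases x <;> simp) (by cases y <;> simp)

lemma erase_eq_inter {γ : Type*} [DecidableEq γ] {s u : Finset γ} {e : γ} (h : s \ u = {e}) :
    s.erase e = s ∩ u := by
  ext x
  simp only [Finset.mem_erase, Finset.mem_inter]
  constructor
  · rintro ⟨hne, hs⟩
    refine ⟨hs, ?_⟩
    by_contra hx
    have hm : x ∈ s \ u := Finset.mem_sdiff.2 ⟨hs, hx⟩
    rw [h, Finset.mem_singleton] at hm
    exact hne hm
  · rintro ⟨hs, hx⟩
    refine ⟨?_, hs⟩
    rintro heq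
    have hm : e ∈ s \ u := by rw [h]; exact Finset.mem_singleton_self e
    exact (Finset.mem_sdiff.1 hm).2 (heq ▸ hx)

lemma sdiff_eq_singleton {γ : Type*} [DecidableEq γ] {s u : Finset γ} {e : γ}
    (hcard : (s \ u).card = 1) (he : e ∈ s) (he' : e ∉ u) : s \ u = {e} := by
  obtain ⟨x, hx⟩ := Finset.card_eq_one.1 hcard
  have hm : e ∈ s \ u := Finset.mem_sdiff.2 ⟨he, he'⟩
  rw [hx, Finset.mem_singleton] at hm
  rw [hx, hm]

lemma linkBasics
    (Tr : (Fin d → ℕ) → BGraph (Fin n) (Fin d))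
    (htree : ∀ u : Fin d → ℕ, (∑ x, u x) + 1 = n → IsTreeOn (Tr u) Finset.univ Finset.univ)
    (hcompat : ∀ u u' : Fin d → ℕ, (∑ x, u x) + 1 = n → (∑ x, u' x) + 1 = n →
      Compatible (Tr u) (Tr u'))
    {t : Fin d → ℕ} (ht : (∑ x, t x) + 2 = n) {ℓ : ℕ}
    {j : ℕ → Fin d} {i i' : ℕ → Fin n}
    (hadj : ∀ k < ℓ, (TLGraph Tr t).Adj (j k) (j (k + 1)))
    (hi : ∀ k < ℓ, (i k, j k) ∈ Tr (t + unitVec (j k)) ∧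
      (i k, j k) ∉ Tr (t + unitVec (j (k + 1))))
    (hi' : ∀ k < ℓ, (i' (k + 1), j (k + 1)) ∈ Tr (t + unitVec (j (k + 1))) ∧
      (i' (k + 1), j (k + 1)) ∉ Tr (t + unitVec (j k)))
    (k : ℕ) (hk : k < ℓ) :
    (Tr (t + unitVec (j k))).erase (i k, j k)
        = Tr (t + unitVec (j k)) ∩ Tr (t + unitVec (j (k+1))) ∧
    (Tr (t + unitVec (j (k+1)))).erase (i' (k+1), j (k+1))
        = Tr (t + unitVec (j k)) ∩ Tr (t + unitVec (j (k+1))) ∧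
    ¬ (toGraph ((Tr (t + unitVec (j k))).erase (i k, j k))).Reachable
        (Sum.inr (j k)) (Sum.inr (j (k+1))) := by
  have hd : diffOne (Tr (t + unitVec (j k))) (Tr (t + unitVec (j (k+1)))) := by
    have h := hadj k hk
    rw [TLGraph, SimpleGraph.fromRel_adj] at h
    rcases h.2 with h2 | h2
    · exact h2
    · exact ⟨h2.2, h2.1⟩
  have hs1 : Tr (t + unitVec (j k)) \ Tr (t + unitVec (j (k+1))) = {(i k, j k)} :=
    sdiff_eq_singleton hd.1 (hi k hk).1 (hi k hk).2
  have hs2 : Tr (t + unitVec (j (k+1))) \ Tr (t + unitVec (j k)) = {(i' (k+1), j (k+1))} :=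
    sdiff_eq_singleton hd.2 (hi' k hk).1 (hi' k hk).2
  have e1 := erase_eq_inter hs1
  have e2 : (Tr (t + unitVec (j (k+1)))).erase (i' (k+1), j (k+1))
      = Tr (t + unitVec (j k)) ∩ Tr (t + unitVec (j (k+1))) := by
    rw [erase_eq_inter hs2, Finset.inter_comm]
  refine ⟨e1, e2, ?_⟩
  exact key (htree _ (hu_of_ht ht _)).2.1 (htree _ (hu_of_ht ht _)).2.1
    (conn_of_tree (htree _ (hu_of_ht ht _)))
    (hcompat _ _ (hu_of_ht ht _) (hu_of_ht ht _))
    (hi k hk).1 (hi k hk).2 (hi' k hk).1 (hi' k hk).2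
    (e1.trans e2.symm)

end MainLemmas

section MainLemmas2
set_option linter.unusedSectionVars false
set_option maxHeartbeats 1000000
variable {n d : ℕ}
variable {Tr : (Fin d → ℕ) → BGraph (Fin n) (Fin d)}
variable (htree : ∀ u : Fin d → ℕ, (∑ x, u x) + 1 = n → IsTreeOn (Tr u) Finset.univ Finset.univ)
variable (hcompat : ∀ u u' : Fin d → ℕ, (∑ x, u x) + 1 = n → (∑ x, u' x) + 1 = n →
      Compatible (Tr u) (Tr u'))
variable {t : Fin d → ℕ} (ht : (∑ x, t x) + 2 = n) {ℓ : ℕ}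
variable {j : ℕ → Fin d} {i i' : ℕ → Fin n}
variable (hinj : ∀ k ≤ ℓ, ∀ k' ≤ ℓ, j k = j k' → k = k')
variable (hadj : ∀ k < ℓ, (TLGraph Tr t).Adj (j k) (j (k + 1)))
variable (hi : ∀ k < ℓ, (i k, j k) ∈ Tr (t + unitVec (j k)) ∧
      (i k, j k) ∉ Tr (t + unitVec (j (k + 1))))
variable (hi' : ∀ k < ℓ, (i' (k + 1), j (k + 1)) ∈ Tr (t + unitVec (j (k + 1))) ∧
      (i' (k + 1), j (k + 1)) ∉ Tr (t + unitVec (j k)))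

include htree hcompat ht hinj hadj hi hi' in
lemma nearLabels_ne (k : ℕ) (h1 : 1 ≤ k) (hk : k < ℓ) : i' k ≠ i k := by
  obtain ⟨m, rfl⟩ : ∃ m, k = m + 1 := ⟨k - 1, by omega⟩
  intro hh
  have hmℓ : m < ℓ := by omega
  obtain ⟨em1, em2, keym⟩ := linkBasics Tr htree hcompat ht hadj hi hi' m hmℓ
  obtain ⟨ek1, ek2, keyk⟩ := linkBasics Tr htree hcompat ht hadj hi hi' (m+1) hk
  have em2' : (Tr (t + unitVec (j (m+1)))).erase (i (m+1), j (m+1))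
      = Tr (t + unitVec (j m)) ∩ Tr (t + unitVec (j (m+1))) := by rw [← hh]; exact em2
  have Feq : Tr (t + unitVec (j m)) ∩ Tr (t + unitVec (j (m+1)))
      = Tr (t + unitVec (j (m+1))) ∩ Tr (t + unitVec (j (m+2))) := em2'.symm.trans ek1
  -- the two special edges
  have heT0 : (i m, j m) ∈ Tr (t + unitVec (j m)) := (hi m hmℓ).1
  have heT1 : (i m, j m) ∉ Tr (t + unitVec (j (m+1))) := (hi m hmℓ).2
  have he''T2 : (i' (m+2), j (m+2)) ∈ Tr (t + unitVec (j (m+2))) := (hi' (m+1) hk).1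
  have he''T1 : (i' (m+2), j (m+2)) ∉ Tr (t + unitVec (j (m+1))) := (hi' (m+1) hk).2
  have hjne : j m ≠ j (m+2) := by
    intro hc
    have := hinj m (by omega) (m+2) (by omega) hc
    omega
  have heT2 : (i m, j m) ∉ Tr (t + unitVec (j (m+2))) := by
    intro hmem
    have hne : (i m, j m) ≠ (i' (m+2), j (m+2)) := by
      intro hc
      exact hjne (congrArg Prod.snd hc)
    have hmm : (i m, j m) ∈ (Tr (t + unitVec (j (m+2)))).erase (i' (m+2), j (m+2)) :=
      Finset.mem_erase.2 ⟨hne, hmem⟩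
    rw [ek2] at hmm
    exact heT1 (Finset.mem_inter.1 hmm).1
  have he''T0 : (i' (m+2), j (m+2)) ∉ Tr (t + unitVec (j m)) := by
    intro hmem
    have hne : (i' (m+2), j (m+2)) ≠ (i m, j m) := by
      intro hc
      exact hjne (congrArg Prod.snd hc).symm
    have hmm : (i' (m+2), j (m+2)) ∈ (Tr (t + unitVec (j m))).erase (i m, j m) :=
      Finset.mem_erase.2 ⟨hne, hmem⟩
    rw [em1] at hmm
    exact he''T1 (Finset.mem_inter.1 hmm).2
  have hF : (Tr (t + unitVec (j m))).erase (i m, j m)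
      = (Tr (t + unitVec (j (m+2)))).erase (i' (m+2), j (m+2)) :=
    em1.trans (Feq.trans ek2.symm)
  have keyfar := key (htree _ (hu_of_ht ht _)).2.1 (htree _ (hu_of_ht ht _)).2.1
    (conn_of_tree (htree _ (hu_of_ht ht _)))
    (hcompat _ _ (hu_of_ht ht _) (hu_of_ht ht _))
    heT0 heT2 he''T2 he''T0 hF
  -- keyfar : ¬ Reach_{(T m).erase (i m, j m)} (inr (j m)) (inr (j (m+2)))
  have keym' : ¬ (toGraph (Tr (t + unitVec (j m)) ∩ Tr (t + unitVec (j (m+1))))).Reachable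
      (Sum.inr (j m)) (Sum.inr (j (m+1))) := by rwa [em1] at keym
  have keyk' : ¬ (toGraph (Tr (t + unitVec (j m)) ∩ Tr (t + unitVec (j (m+1))))).Reachable
      (Sum.inr (j (m+1))) (Sum.inr (j (m+2))) := by
    rw [Feq]
    rwa [ek1] at keyk
  have he₃T1 : (i (m+1), j (m+1)) ∈ Tr (t + unitVec (j (m+1))) := (hi (m+1) hk).1
  have r1 : (toGraph (Tr (t + unitVec (j m)) ∩ Tr (t + unitVec (j (m+1))))).Reachable
      (Sum.inr (j m)) (Sum.inl (i (m+1))) := by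
    obtain ⟨w⟩ := conn_of_tree (htree _ (hu_of_ht ht (j (m+1))))
      (Sum.inr (j m)) (Sum.inl (i (m+1)))
    rcases reach_split (e := (i (m+1), j (m+1))) w with h | h | h
    · rwa [em2'] at h
    · rw [em2'] at h
      exact absurd h keym'
    · rwa [em2'] at h
  have r2 : (toGraph (Tr (t + unitVec (j m)) ∩ Tr (t + unitVec (j (m+1))))).Reachable
      (Sum.inr (j (m+2))) (Sum.inl (i (m+1))) := by
    obtain ⟨w⟩ := conn_of_tree (htree _ (hu_of_ht ht (j (m+1))))
      (Sum.inr (j (m+2))) (Sum.inl (i (m+1)))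
    rcases reach_split (e := (i (m+1), j (m+1))) w with h | h | h
    · rwa [em2'] at h
    · rw [em2'] at h
      exact absurd h.symm keyk'
    · rwa [em2'] at h
  have : (toGraph (Tr (t + unitVec (j m)) ∩ Tr (t + unitVec (j (m+1))))).Reachable
      (Sum.inr (j m)) (Sum.inr (j (m+2))) := r1.trans r2.symm
  rw [← em1] at this
  exact keyfar this

include htree hcompat ht hinj hadj hi hi' in
lemma claimA :
    ∀ k, k < ℓ → ∀ a, a ≤ k →
      (toGraph ((Tr (t + unitVec (j k))).erase (i k, j k))).Reachable
        (Sum.inr (j a)) (Sum.inr (j k)) := by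
  intro k
  induction k using Nat.strong_induction_on with
  | _ k IH =>
    intro hk a ha
    rcases Nat.eq_or_lt_of_le ha with rfl | hlt
    · exact SimpleGraph.Reachable.refl _
    · obtain ⟨m, rfl⟩ : ∃ m, k = m + 1 := ⟨k - 1, by omega⟩
      have hmℓ : m < ℓ := by omega
      obtain ⟨em1, em2, keym⟩ := linkBasics Tr htree hcompat ht hadj hi hi' m hmℓ
      obtain ⟨ek1, _, _⟩ := linkBasics Tr htree hcompat ht hadj hi hi' (m+1) hk
      have hne : i' (m+1) ≠ i (m+1) :=
        nearLabels_ne htree hcompat ht hinj hadj hi hi' (m+1) (by omega) hk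
      have ra := IH m (by omega) hmℓ a (by omega)
      have keym' : ¬ (toGraph (Tr (t + unitVec (j m)) ∩ Tr (t + unitVec (j (m+1))))).Reachable
          (Sum.inr (j m)) (Sum.inr (j (m+1))) := by rwa [em1] at keym
      have ra' : (toGraph (Tr (t + unitVec (j m)) ∩ Tr (t + unitVec (j (m+1))))).Reachable
          (Sum.inr (j a)) (Sum.inr (j m)) := by rwa [em1] at ra
      have notR : ¬ (toGraph (Tr (t + unitVec (j m)) ∩ Tr (t + unitVec (j (m+1))))).Reachable
          (Sum.inr (j a)) (Sum.inr (j (m+1))) := fun h => keym' (ra'.symm.trans h)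
      have he₂T1 : (i' (m+1), j (m+1)) ∈ Tr (t + unitVec (j (m+1))) := (hi' m hmℓ).1
      have he₃T1 : (i (m+1), j (m+1)) ∈ Tr (t + unitVec (j (m+1))) := (hi (m+1) hk).1
      -- step 1: reach inl (i' (m+1)) within T1 minus e₂
      obtain ⟨w⟩ := conn_of_tree (htree _ (hu_of_ht ht (j (m+1))))
        (Sum.inr (j a)) (Sum.inl (i' (m+1)))
      have rs : (toGraph ((Tr (t + unitVec (j (m+1)))).erase (i' (m+1), j (m+1)))).Reachable
          (Sum.inr (j a)) (Sum.inl (i' (m+1))) := by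
        rcases reach_split (e := (i' (m+1), j (m+1))) w with h | h | h
        · exact h
        · exfalso
          rw [em2] at h
          exact notR h
        · exact h
      obtain ⟨p⟩ := rs
      -- step 2: split that path at e₃
      rcases reach_split (e := (i (m+1), j (m+1))) p with h | h | h
      · exfalso
        have h' := reach_mono (Finset.erase_subset _ _) h
        have hadj₃ : (toGraph ((Tr (t + unitVec (j (m+1)))).erase (i' (m+1), j (m+1)))).Adj
            (Sum.inl (i (m+1))) (Sum.inr (j (m+1))) := by
          refine toGraph_adj_lr.2 (Finset.mem_erase.2 ⟨?_, he₃T1⟩)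
          intro hc
          exact hne (congrArg Prod.fst hc).symm
        have hcomb := h'.trans hadj₃.reachable
        rw [em2] at hcomb
        exact notR hcomb
      · exact reach_mono (Finset.erase_subset_erase _ (Finset.erase_subset _ _)) h
      · have h' := reach_mono (Finset.erase_subset_erase _ (Finset.erase_subset _ _)) h
        have hadj₂ : (toGraph ((Tr (t + unitVec (j (m+1)))).erase (i (m+1), j (m+1)))).Adj
            (Sum.inl (i' (m+1))) (Sum.inr (j (m+1))) := by
          refine toGraph_adj_lr.2 (Finset.mem_erase.2 ⟨?_, he₂T1⟩)
          intro hc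
          exact hne (congrArg Prod.fst hc)
        exact h'.trans hadj₂.reachable

end MainLemmas2

set_option maxHeartbeats 1000000 in
theorem statement8 {n d : ℕ} (hn : 2 ≤ n)
    (Tr : (Fin d → ℕ) → BGraph (Fin n) (Fin d))
    (htree : ∀ u : Fin d → ℕ, (∑ j, u j) + 1 = n → IsTreeOn (Tr u) Finset.univ Finset.univ)
    (hRDeg : ∀ u : Fin d → ℕ, (∑ j, u j) + 1 = n → ∀ j, RD (Tr u) j = u j + 1)
    (hcompat : ∀ u u' : Fin d → ℕ, (∑ j, u j) + 1 = n → (∑ j, u' j) + 1 = n →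
      Compatible (Tr u) (Tr u'))
    (hlink : ∀ u : Fin d → ℕ, (∑ j, u j) + 1 = n → ∀ e ∈ Tr u,
      2 ≤ LD (Tr u) e.1 → 2 ≤ RD (Tr u) e.2 →
      ∃ u' : Fin d → ℕ, ((∑ j, u' j) + 1 = n) ∧ ∃ e' ∈ Tr u',
        (Tr u).erase e = (Tr u').erase e')
    (t : Fin d → ℕ) (ht : (∑ j, t j) + 2 = n) (ℓ : ℕ)
    (j : ℕ → Fin d) (i i' : ℕ → Fin n)
    (hinj : ∀ k ≤ ℓ, ∀ k' ≤ ℓ, j k = j k' → k = k')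
    (hadj : ∀ k < ℓ, (TLGraph Tr t).Adj (j k) (j (k + 1)))
    (hi : ∀ k < ℓ, (i k, j k) ∈ Tr (t + unitVec (j k)) ∧
      (i k, j k) ∉ Tr (t + unitVec (j (k + 1))))
    (hi' : ∀ k < ℓ, (i' (k + 1), j (k + 1)) ∈ Tr (t + unitVec (j (k + 1))) ∧
      (i' (k + 1), j (k + 1)) ∉ Tr (t + unitVec (j k))) :
    (∀ k < ℓ, ∀ a ≤ k, ∀ b ≤ ℓ, k < b →
      ¬ (toGraph ((Tr (t + unitVec (j k))).erase (i k, j k))).Reachable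
          (Sum.inr (j a)) (Sum.inr (j b))) ∧
    (∀ k k' : ℕ, 1 ≤ k → k ≤ k' → k' < ℓ → i' k ≠ i k') ∧
    (∀ k ≤ ℓ, ∀ i0 : Fin n, (i0, j k) ∈ interTree Tr t →
      (∀ k' : ℕ, k ≤ k' → k' < ℓ → i k' ≠ i0) ∧
        ∀ k' : ℕ, 1 ≤ k' → k' ≤ k → i' k' ≠ i0) := by
  have acy : ∀ c : Fin d, Acyclic (Tr (t + unitVec c)) :=
    fun c => (htree _ (hu_of_ht ht c)).2.1
  -- part (a), left reachability
  have AL := claimA htree hcompat ht hinj hadj hi hi'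
  -- reversed data
  have hinjR : ∀ k ≤ ℓ, ∀ k' ≤ ℓ, j (ℓ - k) = j (ℓ - k') → k = k' := by
    intro k hk k' hk' h
    have := hinj (ℓ - k) (by omega) (ℓ - k') (by omega) h
    omega
  have hadjR : ∀ k, k < ℓ → (TLGraph Tr t).Adj (j (ℓ - k)) (j (ℓ - (k+1))) := by
    intro k hk
    have h := hadj (ℓ - k - 1) (by omega)
    rw [show ℓ - k - 1 + 1 = ℓ - k from by omega] at h
    rw [show ℓ - (k+1) = ℓ - k - 1 from by omega]
    exact h.symm
  have hiR : ∀ k, k < ℓ → (i' (ℓ - k), j (ℓ - k)) ∈ Tr (t + unitVec (j (ℓ - k))) ∧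
      (i' (ℓ - k), j (ℓ - k)) ∉ Tr (t + unitVec (j (ℓ - (k+1)))) := by
    intro k hk
    have h := hi' (ℓ - k - 1) (by omega)
    rw [show ℓ - k - 1 + 1 = ℓ - k from by omega] at h
    rw [show ℓ - (k+1) = ℓ - k - 1 from by omega]
    exact h
  have hi'R : ∀ k, k < ℓ →
      (i (ℓ - (k+1)), j (ℓ - (k+1))) ∈ Tr (t + unitVec (j (ℓ - (k+1)))) ∧
      (i (ℓ - (k+1)), j (ℓ - (k+1))) ∉ Tr (t + unitVec (j (ℓ - k))) := by
    intro k hk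
    have h := hi (ℓ - k - 1) (by omega)
    rw [show ℓ - (k+1) = ℓ - k - 1 from by omega]
    refine ⟨h.1, ?_⟩
    rw [show ℓ - k = ℓ - k - 1 + 1 from by omega]
    exact h.2
  have AR_raw := claimA (j := fun k => j (ℓ - k)) (i := fun k => i' (ℓ - k))
    (i' := fun k => i (ℓ - k)) htree hcompat ht hinjR hadjR hiR hi'R
  have AR : ∀ m b, m < b → b ≤ ℓ →
      (toGraph ((Tr (t + unitVec (j (m+1)))).erase (i' (m+1), j (m+1)))).Reachable
        (Sum.inr (j b)) (Sum.inr (j (m+1))) := by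
    intro m b h1 h2
    have h3 := AR_raw (ℓ - (m+1)) (by omega) (ℓ - b) (by omega)
    simp only [show ℓ - (ℓ - (m+1)) = m + 1 from by omega,
      show ℓ - (ℓ - b) = b from by omega] at h3
    exact h3
  -- part (b) diagonal
  have B1 := nearLabels_ne htree hcompat ht hinj hadj hi hi'
  refine ⟨?_, ?_, ?_⟩
  · -- part (a)
    intro k hk a ha b hb hkb hreach
    obtain ⟨em1, em2, keym⟩ := linkBasics Tr htree hcompat ht hadj hi hi' k hk
    have h1 := AL k hk a ha
    have h2 := AR k b hkb hb
    rw [em1] at h1 hreach keym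
    rw [em2] at h2
    exact keym ((h1.symm.trans hreach).trans h2)
  · -- part (b)
    intro k k' h1 h2 h3 hh
    rcases Nat.eq_or_lt_of_le h2 with rfl | hlt
    · exact B1 k h1 h3 hh
    · -- k < k'
      have persist : ∀ m, k ≤ m → m ≤ ℓ → (i' k, j k) ∈ Tr (t + unitVec (j m)) := by
        intro m
        induction m with
        | zero => intro hm _; exfalso; omega
        | succ m IHm =>
          intro hkm hmℓ
          rcases Nat.eq_or_lt_of_le hkm with heq | hlt2
          · have hmem := (hi' (k-1) (by omega)).1
            rw [show k - 1 + 1 = k from by omega] at hmem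
            rw [← heq]
            exact hmem
          · have hmem := IHm (by omega) (by omega)
            have hne2 : (i' k, j k) ≠ (i m, j m) := by
              intro hc
              have hjm : j k = j m := congrArg Prod.snd hc
              have hkm' : k = m := hinj k (by omega) m (by omega) hjm
              exact B1 k h1 (by omega) (hkm' ▸ congrArg Prod.fst hc)
            obtain ⟨em1, _, _⟩ := linkBasics Tr htree hcompat ht hadj hi hi' m (by omega)
            have hmm : (i' k, j k) ∈ (Tr (t + unitVec (j m))).erase (i m, j m) :=
              Finset.mem_erase.2 ⟨hne2, hmem⟩
            rw [em1] at hmm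
            exact (Finset.mem_inter.1 hmm).2
      have hmem' : (i' k, j k) ∈ Tr (t + unitVec (j k')) := persist k' h2 (by omega)
      have hjne : j k ≠ j k' := by
        intro hc
        have := hinj k (by omega) k' (by omega) hc
        omega
      have hin : (i' k, j k) ∈ (Tr (t + unitVec (j k'))).erase (i k', j k') := by
        refine Finset.mem_erase.2 ⟨?_, hmem'⟩
        intro hc
        exact hjne (congrArg Prod.snd hc)
      rw [hh] at hin
      have hr1 : (toGraph ((Tr (t + unitVec (j k'))).erase (i k', j k'))).Reachable
          (Sum.inl (i k')) (Sum.inr (j k)) := (toGraph_adj_lr.2 hin).reachable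
      have hr2 := AL k' h3 k (by omega)
      exact not_reach_erase (acy (j k')) (hi k' h3).1 (hr1.trans hr2)
  · -- part (c)
    intro k hkℓ i0 hmem
    have hmemT : ∀ c : Fin d, (i0, j k) ∈ Tr (t + unitVec c) := by
      intro c
      exact (Finset.mem_filter.1 hmem).2 c
    constructor
    · intro k' hk1 hk2 heq
      rcases Nat.eq_or_lt_of_le hk1 with rfl | hlt
      · exact (hi k hk2).2 (by rw [heq]; exact hmemT (j (k+1)))
      · have hjne : j k ≠ j k' := by
          intro hc
          have := hinj k (by omega) k' (by omega) hc
          omega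
        have hin : (i0, j k) ∈ (Tr (t + unitVec (j k'))).erase (i k', j k') := by
          refine Finset.mem_erase.2 ⟨?_, hmemT (j k')⟩
          intro hc
          exact hjne (congrArg Prod.snd hc)
        rw [← heq] at hin
        have hr1 : (toGraph ((Tr (t + unitVec (j k'))).erase (i k', j k'))).Reachable
            (Sum.inl (i k')) (Sum.inr (j k)) := (toGraph_adj_lr.2 hin).reachable
        have hr2 := AL k' hk2 k (by omega)
        exact not_reach_erase (acy (j k')) (hi k' hk2).1 (hr1.trans hr2)
    · intro k' h1 h2 heq
      rcases Nat.eq_or_lt_of_le h2 with rfl | hlt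
      · have hni := (hi' (k'-1) (by omega)).2
        rw [show k' - 1 + 1 = k' from by omega] at hni
        exact hni (by rw [heq]; exact hmemT (j (k'-1)))
      · have hjne : j k ≠ j k' := by
          intro hc
          have := hinj k (by omega) k' (by omega) hc
          omega
        have hin : (i0, j k) ∈ (Tr (t + unitVec (j k'))).erase (i' k', j k') := by
          refine Finset.mem_erase.2 ⟨?_, hmemT (j k')⟩
          intro hc
          exact hjne (congrArg Prod.snd hc)
        rw [← heq] at hin
        have hr1 : (toGraph ((Tr (t + unitVec (j k'))).erase (i' k', j k'))).Reachable
            (Sum.inl (i' k')) (Sum.inr (j k)) := (toGraph_adj_lr.2 hin).reachable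
        have hr2 := AR (k'-1) k (by omega) hkℓ
        rw [show k' - 1 + 1 = k' from by omega] at hr2
        have hmem2 := (hi' (k'-1) (by omega)).1
        rw [show k' - 1 + 1 = k' from by omega] at hmem2
        exact not_reach_erase (acy (j k')) hmem2 (hr1.trans hr2)
end

section
/- Let 𝒯 = {T_v} be an (n,d)-pre-trianguloid and for a lattice point u of (n−1)Δ^{d−1} set 𝕋(u) = ⋃_{j̄∈[d̄]} T_{u+e_j̄}. Let m ≥ 1 with n − m ≥ 0, let s be a lattice point of (n−m)Δ^{d−1}, and let P be the set of lattice points u of (n−1)Δ^{d−1} with u_j̄ ≥ s_j̄ for all j̄ ∈ [d̄]. Then ⋃_{u∈P} 𝕋(u) = ⋃_{j̄∈[d̄]} T_{s+m·e_j̄}, this union is a connected graph, and its right degree vector equals s + m·(1,…,1). -/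
open Finset

/-- The union `𝕋(u)` of the topes at the vertices of the unit simplex `u + Δ^{d-1}`. -/
def deltaUnion {n d : ℕ} (T : (Fin d → ℕ) → Fin n → Fin d) (u : Fin d → ℕ) :
    BGraph (Fin n) (Fin d) :=
  Finset.univ.biUnion fun j => topeGraph (T (u + unitVec j))

/-- The union of the topes at the `d` corners `s + m·e_j` of `s + mΔ^{d-1}`. -/
def cornerUnion {n d : ℕ} (T : (Fin d → ℕ) → Fin n → Fin d) (s : Fin d → ℕ) (m : ℕ) :
    BGraph (Fin n) (Fin d) :=
  Finset.univ.biUnion fun j => topeGraph (T fun k => s k + if k = j then m else 0)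

section MyAux

variable {n d : ℕ}

lemma mem_topeGraph {T' : Fin n → Fin d} {i : Fin n} {j : Fin d} :
    (i, j) ∈ topeGraph T' ↔ T' i = j := by
  simp [topeGraph, Prod.ext_iff, eq_comm]

lemma sum_corner (s : Fin d → ℕ) (m : ℕ) (j : Fin d) :
    (∑ k, (s k + if k = j then m else 0)) = (∑ k, s k) + m := by
  rw [Finset.sum_add_distrib]
  congr 1
  simp [Finset.sum_ite_eq']

lemma prop_aux (T : (Fin d → ℕ) → Fin n → Fin d)
    (hsector : ∀ (u : Fin d → ℕ) (j j' : Fin d), (∑ k, u k) + 1 = n →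
      ∀ i, T (u + unitVec j') i = j → T (u + unitVec j) i = j)
    (s : Fin d → ℕ) (m : ℕ) (hs : (∑ j, s j) + m = n) (i : Fin n) (j : Fin d) :
    ∀ (N : ℕ) (u : Fin d → ℕ), (∑ k, u k) + 1 = n → (∀ k, s k ≤ u k) →
      (∑ k ∈ Finset.univ.erase j, (u k - s k)) ≤ N →
      T (u + unitVec j) i = j → T (fun k => s k + if k = j then m else 0) i = j := by
  have hdecomp : ∀ (g : Fin d → ℕ),
      (∑ k, g k) = g j + ∑ k ∈ Finset.univ.erase j, g k :=
    fun g => (Finset.add_sum_erase _ g (Finset.mem_univ j)).symm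
  intro N
  induction N with
  | zero =>
    intro u hsum hle hN hT
    have hz : ∀ k, k ≠ j → u k = s k := by
      intro k hkj
      have hmem : k ∈ Finset.univ.erase j := Finset.mem_erase.mpr ⟨hkj, Finset.mem_univ k⟩
      have h1 : u k - s k ≤ ∑ l ∈ Finset.univ.erase j, (u l - s l) :=
        Finset.single_le_sum (f := fun l => u l - s l) (fun l _ => Nat.zero_le _) hmem
      have h2 := hle k
      omega
    have hse : (∑ k ∈ Finset.univ.erase j, u k) = ∑ k ∈ Finset.univ.erase j, s k :=
      Finset.sum_congr rfl fun k hk => hz k (Finset.mem_erase.mp hk).1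
    have hsu := hdecomp u
    have hss := hdecomp s
    have hj : u j + 1 = s j + m := by omega
    have heq : u + unitVec j = fun k => s k + if k = j then m else 0 := by
      funext k
      by_cases hkj : k = j
      · subst hkj
        simp only [Pi.add_apply, unitVec, if_true]
        omega
      · simp only [Pi.add_apply, unitVec, if_neg hkj, hz k hkj]
    rw [← heq]
    exact hT
  | succ N ih =>
    intro u hsum hle hN hT
    by_cases h0 : (∑ k ∈ Finset.univ.erase j, (u k - s k)) ≤ N
    · exact ih u hsum hle h0 hT
    · obtain ⟨k, hkmem, hkpos⟩ : ∃ k ∈ Finset.univ.erase j, u k - s k ≠ 0 := by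
        by_contra hc
        push_neg at hc
        have : (∑ k ∈ Finset.univ.erase j, (u k - s k)) = 0 :=
          Finset.sum_eq_zero hc
        omega
      have hkj : k ≠ j := (Finset.mem_erase.mp hkmem).1
      have hks : s k < u k := by have := hle k; omega
      set u' : Fin d → ℕ := fun l => if l = k then u l - 1 else if l = j then u l + 1 else u l
        with hu'
      have hEq : u' + unitVec k = u + unitVec j := by
        funext l
        simp only [Pi.add_apply, unitVec, hu']
        by_cases hlk : l = k
        · subst hlk
          simp only [if_true, if_neg hkj]
          omega
        · by_cases hlj : l = j
          · subst hlj
            simp only [if_neg hlk, if_true, if_neg (Ne.symm hkj)]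
          · simp only [if_neg hlk, if_neg hlj]
      have hsum' : (∑ l, u' l) = ∑ l, u l := by
        have h1 : (∑ l, (u' l + unitVec k l)) = ∑ l, (u l + unitVec j l) := by
          apply Finset.sum_congr rfl
          intro l _
          exact congrFun hEq l
        have h2 : (∑ l, unitVec k l) = 1 := by simp [unitVec]
        have h3 : (∑ l, unitVec j l) = 1 := by simp [unitVec]
        rw [Finset.sum_add_distrib, Finset.sum_add_distrib, h2, h3] at h1
        omega
      have hle' : ∀ l, s l ≤ u' l := by
        intro l
        have := hle l
        simp only [hu']
        by_cases hlk : l = k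
        · subst hlk; simp only [if_true]; omega
        · by_cases hlj : l = j
          · subst hlj; simp only [if_neg hlk, if_true]; omega
          · simp only [if_neg hlk, if_neg hlj]; omega
      have hsplit : ∀ (g : Fin d → ℕ),
          (∑ l ∈ Finset.univ.erase j, g l) = g k + ∑ l ∈ (Finset.univ.erase j).erase k, g l :=
        fun g => (Finset.add_sum_erase _ g hkmem).symm
      have hmeas : (∑ l ∈ Finset.univ.erase j, (u' l - s l)) ≤ N := by
        have hcongr : (∑ l ∈ (Finset.univ.erase j).erase k, (u' l - s l)) =
            ∑ l ∈ (Finset.univ.erase j).erase k, (u l - s l) := by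
          apply Finset.sum_congr rfl
          intro l hl
          have hlk : l ≠ k := (Finset.mem_erase.mp hl).1
          have hlj : l ≠ j := (Finset.mem_erase.mp (Finset.mem_erase.mp hl).2).1
          simp only [hu', if_neg hlk, if_neg hlj]
        have h1 := hsplit (fun l => u' l - s l)
        have h2 := hsplit (fun l => u l - s l)
        have h3 : u' k - s k = u k - 1 - s k := by simp only [hu', if_pos rfl]
        omega
      have hT' : T (u' + unitVec j) i = j := by
        apply hsector u' j k (by omega) i
        rw [hEq]
        exact hT
      exact ih u' (by omega) hle' hmeas hT'

lemma prop_main (T : (Fin d → ℕ) → Fin n → Fin d)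
    (hsector : ∀ (u : Fin d → ℕ) (j j' : Fin d), (∑ k, u k) + 1 = n →
      ∀ i, T (u + unitVec j') i = j → T (u + unitVec j) i = j)
    (s : Fin d → ℕ) (m : ℕ) (hs : (∑ j, s j) + m = n)
    (u : Fin d → ℕ) (hu : (∑ k, u k) + 1 = n) (hle : ∀ k, s k ≤ u k)
    (i : Fin n) (j : Fin d) (hT : T (u + unitVec j) i = j) :
    T (fun k => s k + if k = j then m else 0) i = j :=
  prop_aux T hsector s m hs i j _ u hu hle le_rfl hT

lemma corner_move (T : (Fin d → ℕ) → Fin n → Fin d)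
    (hsector : ∀ (u : Fin d → ℕ) (j j' : Fin d), (∑ k, u k) + 1 = n →
      ∀ i, T (u + unitVec j') i = j → T (u + unitVec j) i = j)
    (s : Fin d → ℕ) (m : ℕ) (hm : 1 ≤ m) (hs : (∑ j, s j) + m = n)
    (k : Fin d) (i : Fin n) (j : Fin d)
    (hT : T (fun l => s l + if l = k then m else 0) i = j) :
    T (fun l => s l + if l = j then m else 0) i = j := by
  set u : Fin d → ℕ := fun l => s l + if l = k then m - 1 else 0 with hu
  have hu1 : u + unitVec k = fun l => s l + if l = k then m else 0 := by
    funext l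
    simp only [Pi.add_apply, unitVec, hu]
    by_cases hlk : l = k
    · subst hlk
      simp only [if_true]
      omega
    · simp only [if_neg hlk]
  have hsum : (∑ l, u l) + 1 = n := by
    rw [hu]
    rw [sum_corner s (m - 1) k]
    omega
  have h2 : T (u + unitVec j) i = j := by
    apply hsector u j k hsum i
    rw [hu1]
    exact hT
  exact prop_main T hsector s m hs u hsum (fun l => Nat.le_add_right _ _) i j h2

lemma mem_cornerUnion_iff (T : (Fin d → ℕ) → Fin n → Fin d)
    (hsector : ∀ (u : Fin d → ℕ) (j j' : Fin d), (∑ k, u k) + 1 = n →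
      ∀ i, T (u + unitVec j') i = j → T (u + unitVec j) i = j)
    (s : Fin d → ℕ) (m : ℕ) (hm : 1 ≤ m) (hs : (∑ j, s j) + m = n)
    (i : Fin n) (j : Fin d) :
    (i, j) ∈ cornerUnion T s m ↔ T (fun l => s l + if l = j then m else 0) i = j := by
  constructor
  · intro h
    obtain ⟨k, -, hk⟩ := Finset.mem_biUnion.mp h
    exact corner_move T hsector s m hm hs k i j (mem_topeGraph.mp hk)
  · intro h
    exact Finset.mem_biUnion.mpr ⟨j, Finset.mem_univ j, mem_topeGraph.mpr h⟩

lemma corner_connected (T : (Fin d → ℕ) → Fin n → Fin d)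
    (hpos : ∀ v : Fin d → ℕ, (∑ j, v j) = n → topePos (T v) = v)
    (hsector : ∀ (u : Fin d → ℕ) (j j' : Fin d), (∑ k, u k) + 1 = n →
      ∀ i, T (u + unitVec j') i = j → T (u + unitVec j) i = j)
    (m : ℕ) (hm : 1 ≤ m) (s : Fin d → ℕ) (hs : (∑ j, s j) + m = n) :
    ∀ x y : Fin n ⊕ Fin d, (toGraph (cornerUnion T s m)).Reachable x y := by
  classical
  have hn : 0 < n := by omega
  have i₀ : Fin n := ⟨0, hn⟩
  rcases isEmpty_or_nonempty (Fin d) with hd | hd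
  · exact (hd.false (T 0 i₀)).elim
  set c : Fin d → Fin d → ℕ := fun j l => s l + if l = j then m else 0 with hc
  set G := toGraph (cornerUnion T s m) with hG
  have move : ∀ (k : Fin d) (i : Fin n) (j : Fin d), T (c k) i = j → T (c j) i = j :=
    fun k i j h => corner_move T hsector s m hm hs k i j h
  have adj : ∀ (i : Fin n) (j : Fin d), T (c j) i = j → G.Adj (Sum.inl i) (Sum.inr j) := by
    intro i j h
    rw [hG, toGraph, SimpleGraph.fromRel_adj]
    refine ⟨by simp, Or.inl ⟨i, j, rfl, rfl, ?_⟩⟩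
    exact Finset.mem_biUnion.mpr ⟨j, Finset.mem_univ j, mem_topeGraph.mpr h⟩
  have selfadj : ∀ (i : Fin n) (k : Fin d), G.Adj (Sum.inl i) (Sum.inr (T (c k) i)) :=
    fun i k => adj i _ (move k i _ rfl)
  have allRight : ∀ j j' : Fin d, G.Reachable (Sum.inr j) (Sum.inr j') := by
    intro j j'
    by_contra hR
    set D₁ : Finset (Fin d) :=
      Finset.univ.filter (fun k => G.Reachable (Sum.inr j) (Sum.inr k)) with hD₁
    set D₂ : Finset (Fin d) :=
      Finset.univ.filter (fun k => ¬ G.Reachable (Sum.inr j) (Sum.inr k)) with hD₂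
    set I₁ : Finset (Fin n) :=
      Finset.univ.filter (fun i => G.Reachable (Sum.inr j) (Sum.inl i)) with hI₁
    set I₂ : Finset (Fin n) :=
      Finset.univ.filter (fun i => ¬ G.Reachable (Sum.inr j) (Sum.inl i)) with hI₂
    have hx : ∀ (j₁ : Fin d) (I : Finset (Fin n)) (D : Finset (Fin d)),
        (∀ i ∈ I, T (c j₁) i ∈ D) → j₁ ∉ D → I.card ≤ ∑ k ∈ D, s k := by
      intro j₁ I D hmap hnd
      have hsub : I ⊆ D.biUnion (fun k => Finset.univ.filter (fun i => T (c j₁) i = k)) := by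
        intro i hi
        exact Finset.mem_biUnion.mpr
          ⟨T (c j₁) i, hmap i hi, Finset.mem_filter.mpr ⟨Finset.mem_univ i, rfl⟩⟩
      calc I.card ≤ (D.biUnion (fun k => Finset.univ.filter (fun i => T (c j₁) i = k))).card :=
            Finset.card_le_card hsub
        _ ≤ ∑ k ∈ D, (Finset.univ.filter (fun i => T (c j₁) i = k)).card :=
            Finset.card_biUnion_le
        _ = ∑ k ∈ D, c j₁ k := by
            refine Finset.sum_congr rfl fun k _ => ?_
            have h := congrFun (hpos (c j₁) (by rw [hc]; rw [sum_corner]; exact hs)) k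
            exact h
        _ = ∑ k ∈ D, s k := by
            refine Finset.sum_congr rfl fun k hk => ?_
            have hkj : k ≠ j₁ := fun h => hnd (h ▸ hk)
            simp [hc, hkj]
    have hjD₁ : j ∈ D₁ := Finset.mem_filter.mpr ⟨Finset.mem_univ j, SimpleGraph.Reachable.refl _⟩
    have hj'D₁ : j' ∉ D₁ := fun h => hR (Finset.mem_filter.mp h).2
    have hjD₂ : j ∉ D₂ := fun h => (Finset.mem_filter.mp h).2 (SimpleGraph.Reachable.refl _)
    have hI1map : ∀ i ∈ I₁, T (c j') i ∈ D₁ := by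
      intro i hi
      refine Finset.mem_filter.mpr ⟨Finset.mem_univ _, ?_⟩
      exact ((Finset.mem_filter.mp hi).2).trans (selfadj i j').reachable
    have hI2map : ∀ i ∈ I₂, T (c j) i ∈ D₂ := by
      intro i hi
      refine Finset.mem_filter.mpr ⟨Finset.mem_univ _, fun hr => ?_⟩
      exact (Finset.mem_filter.mp hi).2 (hr.trans (selfadj i j).symm.reachable)
    have hcard1 : I₁.card ≤ ∑ k ∈ D₁, s k := hx j' I₁ D₁ hI1map hj'D₁
    have hcard2 : I₂.card ≤ ∑ k ∈ D₂, s k := hx j I₂ D₂ hI2map hjD₂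
    have hIcard : I₁.card + I₂.card = n := by
      rw [hI₁, hI₂, Finset.card_filter_add_card_filter_not]
      simp
    have hDsum : (∑ k ∈ D₁, s k) + (∑ k ∈ D₂, s k) = ∑ k, s k := by
      rw [hD₁, hD₂]
      exact Finset.sum_filter_add_sum_filter_not _ _ _
    omega
  have toR : ∀ (x : Fin n ⊕ Fin d), ∃ j, G.Reachable x (Sum.inr j) := by
    intro x
    cases x with
    | inl i =>
      obtain ⟨j₀⟩ := hd
      exact ⟨T (c j₀) i, (selfadj i j₀).reachable⟩
    | inr j => exact ⟨j, SimpleGraph.Reachable.refl _⟩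
  intro x y
  obtain ⟨jx, hxr⟩ := toR x
  obtain ⟨jy, hyr⟩ := toR y
  exact hxr.trans ((allRight jx jy).trans hyr.symm)

end MyAux

theorem statement9 {n d : ℕ} (T : (Fin d → ℕ) → Fin n → Fin d)
    (hpos : ∀ v : Fin d → ℕ, (∑ j, v j) = n → topePos (T v) = v)
    (hsector : ∀ (u : Fin d → ℕ) (j j' : Fin d), (∑ k, u k) + 1 = n →
      ∀ i, T (u + unitVec j') i = j → T (u + unitVec j) i = j)
    (m : ℕ) (hm : 1 ≤ m) (s : Fin d → ℕ) (hs : (∑ j, s j) + m = n) :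
    (∀ u : Fin d → ℕ, (∑ j, u j) + 1 = n → (∀ j, s j ≤ u j) →
      deltaUnion T u ⊆ cornerUnion T s m) ∧
    (∀ e ∈ cornerUnion T s m, ∃ u : Fin d → ℕ,
      ((∑ j, u j) + 1 = n ∧ ∀ j, s j ≤ u j) ∧ e ∈ deltaUnion T u) ∧
    (∀ x y : Fin n ⊕ Fin d, (toGraph (cornerUnion T s m)).Reachable x y) ∧
    (∀ j, RD (cornerUnion T s m) j = s j + m) := by
  refine ⟨?_, ?_, corner_connected T hpos hsector m hm s hs, ?_⟩
  · -- part 1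
    intro u hu hle e he
    obtain ⟨j', -, he⟩ := Finset.mem_biUnion.mp he
    obtain ⟨i, -, rfl⟩ := Finset.mem_image.mp he
    set j := T (u + unitVec j') i with hj
    have h1 : T (u + unitVec j) i = j := hsector u j j' hu i rfl
    have h2 : T (fun l => s l + if l = j then m else 0) i = j :=
      prop_main T hsector s m hs u hu hle i j h1
    exact Finset.mem_biUnion.mpr ⟨j, Finset.mem_univ j, mem_topeGraph.mpr h2⟩
  · -- part 2
    intro e he
    obtain ⟨j, -, he⟩ := Finset.mem_biUnion.mp he
    obtain ⟨i, -, rfl⟩ := Finset.mem_image.mp he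
    refine ⟨fun l => s l + if l = j then m - 1 else 0,
      ⟨by rw [sum_corner]; omega, fun k => Nat.le_add_right _ _⟩, ?_⟩
    have harg : (fun l => s l + if l = j then m - 1 else 0) + unitVec j =
        fun l => s l + if l = j then m else 0 := by
      funext l
      simp only [Pi.add_apply, unitVec]
      by_cases hlj : l = j
      · subst hlj
        simp only [if_true]
        omega
      · simp only [if_neg hlj]
    refine Finset.mem_biUnion.mpr ⟨j, Finset.mem_univ j, ?_⟩
    rw [harg]
    exact mem_topeGraph.mpr rfl
  · -- part 4
    intro j
    classical
    unfold RD
    have himg : (cornerUnion T s m).filter (fun e => e.2 = j) =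
        (Finset.univ.filter fun i => T (fun l => s l + if l = j then m else 0) i = j).image
          (fun i => (i, j)) := by
      ext ⟨a, b⟩
      simp only [Finset.mem_filter, Finset.mem_image, Finset.mem_univ, true_and, Prod.mk.injEq]
      constructor
      · rintro ⟨hmem, rfl⟩
        exact ⟨a, (mem_cornerUnion_iff T hsector s m hm hs a b).mp hmem, rfl, rfl⟩
      · rintro ⟨i, hi, rfl, rfl⟩
        exact ⟨(mem_cornerUnion_iff T hsector s m hm hs i j).mpr hi, rfl⟩
    rw [himg, Finset.card_image_of_injective _ (fun a b h => (Prod.mk.injEq _ _ _ _).mp h |>.1)]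
    have h := congrFun (hpos (fun l => s l + if l = j then m else 0)
      (by rw [sum_corner]; exact hs)) j
    unfold topePos at h
    rw [h]
    simp
end

section
/- Let 𝒯 = {T_v} be an (n,d)-pre-trianguloid with d ≥ 2 and for a lattice point u of (n−1)Δ^{d−1} set 𝕋(u) = ⋃_{j̄∈[d̄]} T_{u+e_j̄}. Let 1 ≤ m ≤ n and let s be a lattice point of (n−m)Δ^{d−1}. Then there are at most m lattice points u of (n−1)Δ^{d−1} with u_j̄ ≥ s_j̄ for all j̄ ∈ [d̄] such that the left degree vector LD(𝕋(u)) has one entry equal to d and all other entries equal to 1 (i.e. such that 𝕋(u) encodes a translated unit simplex). -/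
open Finset

section StarLemma
variable {α : Type*} [DecidableEq α] {d : ℕ}

/-- Marker uniqueness. -/
theorem markerUnique (E : Finset α) (w : Fin d → ℕ) (h : α → Fin d → Fin d)
    (hS : ∀ i ∈ E, ∀ β c, h i β = c → h i c = c)
    (hP1 : ∀ β c, c ≠ β → (E.filter fun i => h i β = c).card = w c)
    (hP2 : ∀ c, (E.filter fun i => h i c = c).card = w c + 1)
    {c β : Fin d} (hcb : c ≠ β) {x y : α} (hx : x ∈ E) (hy : y ∈ E)
    (hxc : h x c = c) (hyc : h y c = c) (hxb : h x β ≠ c) (hyb : h y β ≠ c) : x = y := by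
  by_contra hxy
  have hsub : insert x (insert y (E.filter fun i => h i β = c)) ⊆ E.filter fun i => h i c = c := by
    intro v hv
    simp only [mem_insert] at hv
    rcases hv with rfl | rfl | hv
    · exact mem_filter.2 ⟨hx, hxc⟩
    · exact mem_filter.2 ⟨hy, hyc⟩
    · rcases mem_filter.1 hv with ⟨hvE, hvb⟩
      exact mem_filter.2 ⟨hvE, hS v hvE β c hvb⟩
  have hxnot : x ∉ insert y (E.filter fun i => h i β = c) := by
    simp only [mem_insert, mem_filter]
    push_neg
    exact ⟨hxy, fun _ => hxb⟩
  have hynot : y ∉ (E.filter fun i => h i β = c) := by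
    simp only [mem_filter]
    push_neg
    exact fun _ => hyb
  have hcard := card_le_card hsub
  rw [card_insert_of_notMem hxnot, card_insert_of_notMem hynot, hP1 β c hcb, hP2 c] at hcard
  omega

/-- Lemma W: if `i₀` has two fixed directions in a star, all other elements take equal
values at these two directions. -/
theorem lemmaW (E : Finset α) (w : Fin d → ℕ) (h : α → Fin d → Fin d)
    (hS : ∀ i ∈ E, ∀ β c, h i β = c → h i c = c)
    (hP1 : ∀ β c, c ≠ β → (E.filter fun i => h i β = c).card = w c)
    (hP2 : ∀ c, (E.filter fun i => h i c = c).card = w c + 1)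
    {i₀ : α} (hi₀ : i₀ ∈ E) {j₀ j₁ : Fin d} (hj : j₀ ≠ j₁)
    (h0 : h i₀ j₀ = j₀) (h1 : h i₀ j₁ = j₁) :
    ∀ i ∈ E, i ≠ i₀ → h i j₀ = h i j₁ := by
  classical
  by_contra hcon
  push_neg at hcon
  obtain ⟨x₁, hx₁E, hx₁ne, hx₁neq⟩ := hcon
  set C := h x₁ j₀ with hC
  -- the property of being a "Δ element"
  set D : α → Prop := fun x => x ∈ E ∧ x ≠ i₀ ∧ h x j₀ ≠ h x j₁ with hD
  have hDx₁ : D x₁ := ⟨hx₁E, hx₁ne, hx₁neq⟩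
  -- tails avoid j₀ and j₁
  have ta0 : ∀ x, D x → h x j₀ ≠ j₀ := by
    intro x ⟨hxE, hxne, hxneq⟩ htail
    -- head ≠ j₀ : if h x j₁ = j₀ then h x j₀ = j₀ ⟹ head = tail
    have hhead : h x j₁ ≠ j₀ := by
      intro hh
      exact hxneq (by rw [htail, hh])
    exact hxne (markerUnique E w h hS hP1 hP2 hj hxE hi₀ htail h0 hhead (by rw [h1]; exact hj.symm))
  have ta1 : ∀ x, D x → h x j₀ ≠ j₁ := by
    intro x ⟨hxE, hxne, hxneq⟩ htail
    exact hxneq (by rw [htail, hS x hxE j₀ j₁ htail])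
  have hd1 : ∀ x, D x → h x j₁ ≠ j₁ := by
    intro x hx htail
    have hxE := hx.1
    have htl : h x j₀ ≠ j₁ := ta1 x hx
    refine hx.2.1 (markerUnique E w h hS hP1 hP2 hj.symm hxE hi₀ htail h1 htl ?_)
    rw [h0]; exact hj
  -- predecessor existence
  have predL : ∀ x, D x → ∃ y, D y ∧ h y j₁ = h x j₀ := by
    intro x hx
    have hxE := hx.1
    set γ := h x j₀ with hγ
    have hγ0 : γ ≠ j₀ := ta0 x hx
    have hγ1 : γ ≠ j₁ := ta1 x hx
    have hcard0 : (E.filter fun v => h v j₀ = γ).card = w γ := hP1 j₀ γ hγ0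
    have hcard1 : (E.filter fun v => h v j₁ = γ).card = w γ := hP1 j₁ γ hγ1
    have hxmem : x ∈ E.filter fun v => h v j₀ = γ := mem_filter.2 ⟨hxE, rfl⟩
    have hxnot : x ∉ E.filter fun v => h v j₁ = γ := by
      simp only [mem_filter]
      push_neg
      intro _
      exact fun hh => hx.2.2 (by rw [hh])
    by_contra hnone
    push_neg at hnone
    -- then filter j₁ ⊆ (filter j₀).erase x
    have hsub : (E.filter fun v => h v j₁ = γ) ⊆ (E.filter fun v => h v j₀ = γ).erase x := by
      intro y hy
      rcases mem_filter.1 hy with ⟨hyE, hyv⟩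
      have hyne : y ≠ i₀ := by
        intro hcon
        subst hcon
        rw [h1] at hyv
        exact hγ1 hyv.symm
      by_cases hyd : h y j₀ = h y j₁
      · refine mem_erase.2 ⟨?_, mem_filter.2 ⟨hyE, by rw [hyd, hyv]⟩⟩
        intro hcon
        subst hcon
        exact hxnot hy
      · exact absurd hyv (hnone y ⟨hyE, hyne, hyd⟩)
    have hle := card_le_card hsub
    have hpos : 0 < (E.filter fun v => h v j₀ = γ).card := card_pos.2 ⟨x, hxmem⟩
    rw [hcard1, card_erase_of_mem hxmem, hcard0] at hle
    rw [hcard0] at hpos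
    omega
  -- tail-injectivity
  have tailInj : ∀ x y, D x → D y → h x j₀ = h y j₀ → x = y := by
    intro x y hx hy hxyt
    have hγ1 : h x j₀ ≠ j₁ := ta1 x hx
    have e1 : h x (h x j₀) = h x j₀ := hS x hx.1 j₀ _ rfl
    have e2 : h y (h x j₀) = h x j₀ := by
      rw [hxyt]; exact hS y hy.1 j₀ _ rfl
    have e3 : h x j₁ ≠ h x j₀ := fun hh => hx.2.2 hh.symm
    have e4 : h y j₁ ≠ h x j₀ := by
      rw [hxyt]; exact fun hh => hy.2.2 hh.symm
    exact markerUnique E w h hS hP1 hP2 hγ1 hx.1 hy.1 e1 e2 e3 e4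
  -- the step lemma
  have st : ∀ x (hx : D x), h x C = h x j₁ → h x j₀ ≠ C →
      ∀ y, D y → h y j₁ = h x j₀ → h y C = h y j₁ := by
    intro x hx hinv htne y hy hyt
    set γ := h x j₀ with hγ
    have hγ0 : γ ≠ j₀ := ta0 x hx
    have hγC : γ ≠ C := htne
    -- Φ := filter (h · γ = γ), Q := filter (h · C = γ), P := filter (h · j₀ = γ)
    have hΦ : (E.filter fun v => h v γ = γ).card = w γ + 1 := hP2 γ
    have hQ : (E.filter fun v => h v C = γ).card = w γ := hP1 C γ hγC
    have hxΦ : x ∈ E.filter fun v => h v γ = γ := mem_filter.2 ⟨hx.1, hS x hx.1 j₀ γ rfl⟩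
    have hxQ : x ∉ E.filter fun v => h v C = γ := by
      simp only [mem_filter]
      push_neg
      intro _
      rw [hinv]
      exact fun hh => hx.2.2 hh.symm
    have hsub : (E.filter fun v => h v C = γ) ⊆ (E.filter fun v => h v γ = γ).erase x := by
      intro v hv
      rcases mem_filter.1 hv with ⟨hvE, hvC⟩
      refine mem_erase.2 ⟨?_, mem_filter.2 ⟨hvE, hS v hvE C γ hvC⟩⟩
      intro hcon
      subst hcon
      exact hxQ hv
    have heq : (E.filter fun v => h v C = γ) = (E.filter fun v => h v γ = γ).erase x := by
      apply eq_of_subset_of_card_le hsub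
      rw [hQ, card_erase_of_mem hxΦ, hΦ]
      omega
    have hyΦ : y ∈ (E.filter fun v => h v γ = γ).erase x := by
      refine mem_erase.2 ⟨?_, mem_filter.2 ⟨hy.1, hS y hy.1 j₁ γ hyt⟩⟩
      intro hcon
      subst hcon
      exact hx.2.2 (hyt ▸ rfl)
    rw [← heq] at hyΦ
    rw [(mem_filter.1 hyΦ).2, hyt]
  -- the predecessor function
  have predF : ∀ x, D x → ∃ y, D y ∧ h y j₁ = h x j₀ := predL
  classical
  choose pf hpf1 hpf2 using fun x (hx : D x) => predL x hx
  -- sequence of iterated predecessors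
  let seq : ℕ → α := fun s => Nat.rec x₁ (fun _ prev => @dite _ (D prev) (Classical.propDecidable _) (fun hp => pf prev hp) (fun _ => prev)) s
  have seq_succ : ∀ s, seq (s + 1) = @dite _ (D (seq s)) (Classical.propDecidable _) (fun hp => pf (seq s) hp) (fun _ => seq s) := fun s => rfl
  have seqD : ∀ s, D (seq s) := by
    intro s
    induction s with
    | zero => exact hDx₁
    | succ s ih =>
      rw [seq_succ, dif_pos ih]
      exact hpf1 (seq s) ih
  have seq_step : ∀ s, seq (s + 1) = pf (seq s) (seqD s) := by
    intro s
    rw [seq_succ, dif_pos (seqD s)]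
  have seq_head : ∀ s, h (seq (s + 1)) j₁ = h (seq s) j₀ := by
    intro s
    rw [seq_step s]
    exact hpf2 (seq s) (seqD s)
  -- the invariant
  have inv : ∀ s, h (seq (s + 1)) C = h (seq (s + 1)) j₁ := by
    intro s
    induction s with
    | zero =>
      have hh : h (seq 1) j₁ = C := seq_head 0
      have goal1 : h (seq 1) C = C := hS (seq 1) (seqD 1).1 j₁ C hh
      show h (seq 1) C = h (seq 1) j₁
      rw [hh]
      exact goal1
    | succ s ih =>
      -- step: seq (s+2) = pf (seq (s+1))
      have htne : h (seq (s + 1)) j₀ ≠ C := by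
        intro he
        have : seq (s + 1) = x₁ := tailInj (seq (s + 1)) x₁ (seqD (s + 1)) hDx₁ (by rw [he])
        rw [this] at ih
        have hxc : h x₁ C = C := hS x₁ hx₁E j₀ C rfl
        rw [hxc] at ih
        exact hx₁neq ih
      exact st (seq (s + 1)) (seqD (s + 1)) ih htne (seq (s + 2)) (seqD (s + 2)) (seq_head (s + 1))
  -- injectivity of the step
  have seqInj : ∀ s t, seq (s + 1) = seq (t + 1) → seq s = seq t := by
    intro s t he
    apply tailInj _ _ (seqD s) (seqD t)
    rw [← seq_head s, ← seq_head t, he]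
  -- cancellation
  have canc : ∀ p q, seq p = seq (p + q) → seq 0 = seq q := by
    intro p
    induction p with
    | zero => intro q hq; rw [Nat.zero_add] at hq; exact hq
    | succ p ih =>
      intro q hq
      apply ih
      apply seqInj
      have : p + 1 + q = (p + q) + 1 := by omega
      rw [← this]
      exact hq
  -- pigeonhole
  have maps : ∀ s : Fin (E.card + 1), seq s ∈ E := fun s => (seqD s).1
  obtain ⟨p, _, q, _, hpq, he⟩ := Finset.exists_ne_map_eq_of_card_lt_of_maps_to
    (s := (univ : Finset (Fin (E.card + 1)))) (t := E)
    (by simp) (fun s _ => maps s)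
  -- wlog p < q
  have key : ∀ (p q : ℕ), p < q → seq p = seq q → False := by
    intro p q hlt he
    have : seq 0 = seq (q - p) := canc p (q - p) (by rw [show p + (q - p) = q by omega]; exact he)
    obtain ⟨L, hL⟩ : ∃ L, q - p = L + 1 := ⟨q - p - 1, by omega⟩
    rw [hL] at this
    have hinv := inv L
    rw [← this] at hinv
    have hinv' : h x₁ C = h x₁ j₁ := hinv
    have hxc : h x₁ C = C := hS x₁ hx₁E j₀ C rfl
    rw [hxc] at hinv'
    exact hx₁neq hinv'
  rcases lt_or_gt_of_ne (fun hh : (p : Fin (E.card+1)) = q => hpq hh) with hlt | hlt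
  · exact key p q (by exact_mod_cast hlt) he
  · exact key q p (by exact_mod_cast hlt) he.symm

end StarLemma

section Helpers
variable {d : ℕ}

theorem sum_unitVec (j : Fin d) : (∑ k, unitVec j k) = 1 := by
  simp [unitVec, Finset.sum_ite_eq' Finset.univ j (fun _ => 1)]

theorem sum_add_unitVec (u : Fin d → ℕ) (j : Fin d) :
    (∑ k, (u + unitVec j) k) = (∑ k, u k) + 1 := by
  simp only [Pi.add_apply]
  rw [Finset.sum_add_distrib, sum_unitVec]

theorem unitVec_self (j : Fin d) : unitVec j j = 1 := by simp [unitVec]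

theorem unitVec_ne {j c : Fin d} (h : c ≠ j) : unitVec j c = 0 := by simp [unitVec, h]

theorem swap_unitVec (z : Fin d → ℕ) (β γ : Fin d) :
    z + unitVec β + unitVec γ = z + unitVec γ + unitVec β := by
  funext l
  simp only [Pi.add_apply]
  omega

end Helpers

section DoubleStar
variable {α : Type*} [DecidableEq α] {d : ℕ}

theorem doubleStar (E : Finset α) (T : (Fin d → ℕ) → α → Fin d) (N : ℕ)
    (hpos : ∀ v, (∑ k, v k) = N → ∀ c, (E.filter fun i => T v i = c).card = v c)
    (hsec : ∀ u (j j' : Fin d), (∑ k, u k) + 1 = N → ∀ i ∈ E,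
      T (u + unitVec j') i = j → T (u + unitVec j) i = j)
    (z : Fin d → ℕ) (hz : (∑ k, z k) + 2 = N)
    {ist i : α} (hist : ist ∈ E) (hiE : i ∈ E) (hii : i ≠ ist)
    {j j' a a' : Fin d} (hjj : j ≠ j')
    (ha' : T (z + unitVec j' + unitVec a') ist = a')
    (ha : T (z + unitVec j + unitVec a) ist = a)
    (hij : T (z + unitVec j' + unitVec a') i = j) :
    T (z + unitVec j + unitVec a) i = j := by
  have hzsum : ∀ β : Fin d, (∑ k, (z + unitVec β) k) + 1 = N := by
    intro β
    rw [sum_add_unitVec]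
    omega
  have hzsum2 : ∀ β γ : Fin d, (∑ k, (z + unitVec β + unitVec γ) k) = N := by
    intro β γ
    rw [sum_add_unitVec, sum_add_unitVec]
    omega
  -- sector within star β
  have hSs : ∀ (β : Fin d), ∀ x ∈ E, ∀ γ c, T (z + unitVec β + unitVec γ) x = c →
      T (z + unitVec β + unitVec c) x = c := by
    intro β x hx γ c hv
    exact hsec (z + unitVec β) c γ (hzsum β) x hx hv
  -- Lemma W at star β
  have LW : ∀ (β p q : Fin d), p ≠ q → T (z + unitVec β + unitVec p) ist = p →
      T (z + unitVec β + unitVec q) ist = q →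
      ∀ x ∈ E, x ≠ ist → T (z + unitVec β + unitVec p) x = T (z + unitVec β + unitVec q) x := by
    intro β p q hpq hp hq
    refine lemmaW E (z + unitVec β) (fun x γ => T (z + unitVec β + unitVec γ) x) ?_ ?_ ?_ hist hpq hp hq
    · exact fun x hx β' c hv => hSs β x hx β' c hv
    · intro γ c hcγ
      rw [hpos (z + unitVec β + unitVec γ) (hzsum2 β γ) c]
      simp only [Pi.add_apply]
      rw [unitVec_ne hcγ]
      omega
    · intro c
      rw [hpos (z + unitVec β + unitVec c) (hzsum2 β c) c]
      simp only [Pi.add_apply]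
      rw [unitVec_self]
  -- derived facts
  have d1 : T (z + unitVec a' + unitVec j) i = j := by
    apply hSs a' i hiE j' j
    rw [swap_unitVec]
    exact hij
  have d2 : T (z + unitVec j + unitVec j) i = j := by
    apply hSs j i hiE a' j
    rw [swap_unitVec]
    exact d1
  by_cases haj : a = j
  · subst haj; exact d2
  by_cases haa : a' = a
  · subst haa
    rw [swap_unitVec]
    exact d1
  set t := T (z + unitVec j + unitVec j') ist with ht
  by_cases htj : t = j
  · have hii' : T (z + unitVec j + unitVec j) ist = j := hSs j ist hist j' j (ht.symm.trans htj)
    have := LW j j a (Ne.symm haj) hii' ha i hiE hii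
    rw [← this]
    exact d2
  by_cases hta : t = a
  · have h1 : T (z + unitVec j' + unitVec a) ist = a := by
      apply hSs j' ist hist j a
      rw [swap_unitVec z j' j]
      exact ht.symm.trans hta
    have h2 := LW j' a' a haa ha' h1 i hiE hii
    rw [h2] at hij
    have h3 : T (z + unitVec a + unitVec j) i = j := by
      apply hSs a i hiE j' j
      rw [swap_unitVec]
      exact hij
    rw [swap_unitVec]
    exact h3
  · -- t ∉ {j, a}
    have hjt : T (z + unitVec j + unitVec t) ist = t := hSs j ist hist j' t ht.symm
    have hstep := LW j t a hta hjt ha i hiE hii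
    suffices hsuf : T (z + unitVec j + unitVec t) i = j by
      rw [← hstep]
      exact hsuf
    by_cases hta' : t = a'
    · subst hta'
      rw [swap_unitVec]
      exact d1
    · have hj't : T (z + unitVec j' + unitVec t) ist = t := by
        apply hSs j' ist hist j t
        rw [swap_unitVec z j' j]
      have h4 := LW j' a' t (fun hh => hta' hh.symm) ha' hj't i hiE hii
      rw [h4] at hij
      have h5 : T (z + unitVec t + unitVec j) i = j := by
        apply hSs t i hiE j' j
        rw [swap_unitVec]
        exact hij
      rw [swap_unitVec]
      exact h5

end DoubleStar

section ApexUnique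
variable {α : Type*} [DecidableEq α] {d : ℕ}

theorem apexUnique (hd : 2 ≤ d) :
    ∀ (N : ℕ) (E : Finset α) (T : (Fin d → ℕ) → α → Fin d),
      E.card = N →
      (∀ v, (∑ k, v k) = N → ∀ c, (E.filter fun i => T v i = c).card = v c) →
      (∀ u (j j' : Fin d), (∑ k, u k) + 1 = N → ∀ i ∈ E,
        T (u + unitVec j') i = j → T (u + unitVec j) i = j) →
      ∀ (u u' : Fin d → ℕ) (i₀ : α) (f f' : α → Fin d), i₀ ∈ E →
        (∑ k, u k) + 1 = N → (∑ k, u' k) + 1 = N →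
        (∀ (jj : Fin d) (x : α), x ∈ E → T (u + unitVec jj) x = if x = i₀ then jj else f x) →
        (∀ (jj : Fin d) (x : α), x ∈ E → T (u' + unitVec jj) x = if x = i₀ then jj else f' x) →
        u = u' := by
  intro N
  induction N with
  | zero => intro E T hE hpos hsec u u' i₀ f f' hi₀ hu hu' hf hf'; omega
  | succ N ih =>
    intro E T hE hpos hsec u u' i₀ f f' hi₀ hu hu' hf hf'
    have hd0 : 0 < d := by omega
    -- fiber cardinality from the format
    have fibcard : ∀ (uu : Fin d → ℕ) (ff : α → Fin d), ((∑ k, uu k) + 1 = N + 1) →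
        (∀ (jj : Fin d) (x : α), x ∈ E → T (uu + unitVec jj) x = if x = i₀ then jj else ff x) →
        ∀ cc : Fin d, ((E.erase i₀).filter fun x => ff x = cc).card = uu cc := by
      intro uu ff huu hfmt cc
      obtain ⟨jc, hjc⟩ : ∃ jj : Fin d, jj ≠ cc := by
        by_cases h0 : (⟨0, hd0⟩ : Fin d) = cc
        · refine ⟨⟨1, by omega⟩, ?_⟩
          rw [← h0]
          simp [Fin.ext_iff]
        · exact ⟨⟨0, hd0⟩, h0⟩
      have h1 := hpos (uu + unitVec jc) (by rw [sum_add_unitVec]; omega) cc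
      have h2 : (E.filter fun x => T (uu + unitVec jc) x = cc)
          = (E.erase i₀).filter fun x => ff x = cc := by
        ext x
        simp only [mem_filter, mem_erase]
        constructor
        · rintro ⟨hxE, hxv⟩
          rw [hfmt jc x hxE] at hxv
          by_cases hxi : x = i₀
          · rw [if_pos hxi] at hxv
            exact absurd hxv hjc
          · rw [if_neg hxi] at hxv
            exact ⟨⟨hxi, hxE⟩, hxv⟩
        · rintro ⟨⟨hxi, hxE⟩, hxv⟩
          refine ⟨hxE, ?_⟩
          rw [hfmt jc x hxE, if_neg hxi, hxv]
      rw [h2] at h1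
      rw [h1]
      simp only [Pi.add_apply]
      rw [unitVec_ne (Ne.symm hjc)]
      omega
    have key : ∀ (uu uu' : Fin d → ℕ) (ff ff' : α → Fin d),
        (∑ k, uu k) + 1 = N + 1 → (∑ k, uu' k) + 1 = N + 1 →
        (∀ (jj : Fin d) (x : α), x ∈ E → T (uu + unitVec jj) x = if x = i₀ then jj else ff x) →
        (∀ (jj : Fin d) (x : α), x ∈ E → T (uu' + unitVec jj) x = if x = i₀ then jj else ff' x) →
        ∀ c : Fin d, uu' c < uu c → False := by
      intro uu uu' ff ff' huu huu' hff hff' c hclt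
      have hcf := fibcard uu ff huu hff c
      have hcf' := fibcard uu' ff' huu' hff' c
      -- find the element to delete
      have hsu : ¬ ((E.erase i₀).filter fun x => ff x = c) ⊆
          ((E.erase i₀).filter fun x => ff' x = c) := by
        intro hsub
        have := card_le_card hsub
        rw [hcf, hcf'] at this
        omega
      obtain ⟨ist, histf, histnf⟩ := not_subset.1 hsu
      obtain ⟨histmem, hffc⟩ := mem_filter.1 histf
      obtain ⟨histne, histE⟩ := mem_erase.1 histmem
      have hbc : ff' ist ≠ c := by
        intro hcon
        exact histnf (mem_filter.2 ⟨histmem, hcon⟩)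
      set b := ff' ist with hbdef
      have hub' : 1 ≤ uu' b := by
        have hcb := fibcard uu' ff' huu' hff' b
        have hmem : ist ∈ (E.erase i₀).filter fun x => ff' x = b := mem_filter.2 ⟨histmem, rfl⟩
        have hcp := card_pos.2 ⟨ist, hmem⟩
        omega
      have huuc : 1 ≤ uu c := by omega
      -- the fixed-direction choice function
      have exjf : ∀ w : Fin d → ℕ, ∃ jj : Fin d,
          ((∑ k, w k) + 1 = N + 1 → T (w + unitVec jj) ist = jj) := by
        intro w
        by_cases hw : (∑ k, w k) + 1 = N + 1
        · exact ⟨T (w + unitVec ⟨0, hd0⟩) ist,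
            fun _ => hsec w _ ⟨0, hd0⟩ hw ist histE rfl⟩
        · exact ⟨⟨0, hd0⟩, fun hcon => absurd hcon hw⟩
      choose jf hjf using exjf
      -- well-definedness of the deleted family
      have wd : ∀ w : Fin d → ℕ, (∑ k, w k) + 1 = N + 1 → ∀ bb : Fin d,
          T (w + unitVec bb) ist = bb → ∀ x, x ∈ E → x ≠ ist →
          T (w + unitVec (jf w)) x = T (w + unitVec bb) x := by
        intro w hw bb hbb x hxE hxne
        by_cases hbj : jf w = bb
        · rw [hbj]
        · refine lemmaW E w (fun y γ => T (w + unitVec γ) y) ?_ ?_ ?_ histE hbj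
            (hjf w hw) hbb x hxE hxne
          · exact fun y hy β cc hv => hsec w cc β hw y hy hv
          · intro γ cc hcγ
            rw [hpos (w + unitVec γ) (by rw [sum_add_unitVec]; omega) cc]
            simp only [Pi.add_apply]
            rw [unitVec_ne hcγ]
            omega
          · intro cc
            rw [hpos (w + unitVec cc) (by rw [sum_add_unitVec]; omega) cc]
            simp only [Pi.add_apply]
            rw [unitVec_self]
      -- positions for the deleted family
      have pos2 : ∀ v, (∑ k, v k) = N → ∀ cc : Fin d,
          ((E.erase ist).filter fun x => T (v + unitVec (jf v)) x = cc).card = v cc := by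
        intro v hv cc
        have hv1 : (∑ k, v k) + 1 = N + 1 := by omega
        have hjv := hjf v hv1
        have hbase := hpos (v + unitVec (jf v)) (by rw [sum_add_unitVec]; omega) cc
        have hfe : (E.erase ist).filter (fun x => T (v + unitVec (jf v)) x = cc)
            = (E.filter fun x => T (v + unitVec (jf v)) x = cc).erase ist := by
          ext x
          simp only [mem_filter, mem_erase]
          tauto
        rw [hfe]
        by_cases hcc : cc = jf v
        · subst hcc
          rw [card_erase_of_mem (mem_filter.2 ⟨histE, hjv⟩), hbase]
          simp only [Pi.add_apply]
          rw [unitVec_self]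
          omega
        · have hnot : ist ∉ E.filter fun x => T (v + unitVec (jf v)) x = cc := by
            intro hmem
            exact hcc (by rw [← (mem_filter.1 hmem).2, hjv])
          rw [Finset.erase_eq_of_notMem hnot, hbase]
          simp only [Pi.add_apply]
          rw [unitVec_ne hcc]
          omega
      -- sector axiom for the deleted family
      have sec2 : ∀ z (jA jB : Fin d), (∑ k, z k) + 1 = N → ∀ x ∈ E.erase ist,
          T (z + unitVec jB + unitVec (jf (z + unitVec jB))) x = jA →
          T (z + unitVec jA + unitVec (jf (z + unitVec jA))) x = jA := by
        intro z jA jB hz x hx hval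
        obtain ⟨hxne, hxE⟩ := mem_erase.1 hx
        by_cases hAB : jA = jB
        · subst hAB; exact hval
        · have ha' := hjf (z + unitVec jB) (by rw [sum_add_unitVec]; omega)
          have ha := hjf (z + unitVec jA) (by rw [sum_add_unitVec]; omega)
          exact doubleStar E T (N + 1) hpos hsec z (by omega) histE hxE hxne hAB ha' ha hval
      -- the reduced positions
      set ub : Fin d → ℕ := fun l => uu l - unitVec c l with hubdef
      set ub' : Fin d → ℕ := fun l => uu' l - unitVec b l with hub'def
      have hub : ub + unitVec c = uu := by
        funext l
        simp only [Pi.add_apply, hubdef, unitVec]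
        by_cases hl : l = c
        · subst hl; simp; omega
        · simp [hl]
      have hub'e : ub' + unitVec b = uu' := by
        funext l
        simp only [Pi.add_apply, hub'def, unitVec]
        by_cases hl : l = b
        · subst hl; simp; omega
        · simp [hl]
      have hubsum : (∑ k, ub k) + 1 = N := by
        have h1 := sum_add_unitVec ub c
        rw [hub] at h1
        omega
      have hub'sum : (∑ k, ub' k) + 1 = N := by
        have h1 := sum_add_unitVec ub' b
        rw [hub'e] at h1
        omega
      -- formats for the deleted family
      have fmt2 : ∀ (jj : Fin d) (x : α), x ∈ E.erase ist →
          T (ub + unitVec jj + unitVec (jf (ub + unitVec jj))) x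
            = if x = i₀ then jj else ff x := by
        intro jj x hx
        obtain ⟨hxne, hxE⟩ := mem_erase.1 hx
        have hwsum : (∑ k, (ub + unitVec jj) k) + 1 = N + 1 := by
          rw [sum_add_unitVec]; omega
        have hpt : ub + unitVec jj + unitVec c = uu + unitVec jj := by
          rw [swap_unitVec ub jj c, hub]
        have hcfix : T (ub + unitVec jj + unitVec c) ist = c := by
          rw [hpt, hff jj ist histE, if_neg histne]
          exact hffc
        have hwd := wd (ub + unitVec jj) hwsum c hcfix x hxE hxne
        rw [hwd, hpt, hff jj x hxE]
      have fmt2' : ∀ (jj : Fin d) (x : α), x ∈ E.erase ist →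
          T (ub' + unitVec jj + unitVec (jf (ub' + unitVec jj))) x
            = if x = i₀ then jj else ff' x := by
        intro jj x hx
        obtain ⟨hxne, hxE⟩ := mem_erase.1 hx
        have hwsum : (∑ k, (ub' + unitVec jj) k) + 1 = N + 1 := by
          rw [sum_add_unitVec]; omega
        have hpt : ub' + unitVec jj + unitVec b = uu' + unitVec jj := by
          rw [swap_unitVec ub' jj b, hub'e]
        have hcfix : T (ub' + unitVec jj + unitVec b) ist = b := by
          rw [hpt, hff' jj ist histE, if_neg histne]
        have hwd := wd (ub' + unitVec jj) hwsum b hcfix x hxE hxne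
        rw [hwd, hpt, hff' jj x hxE]
      have hi₀' : i₀ ∈ E.erase ist := mem_erase.2 ⟨Ne.symm histne, hi₀⟩
      have hcard : (E.erase ist).card = N := by
        rw [card_erase_of_mem histE, hE]
        omega
      have heq := ih (E.erase ist) (fun w x => T (w + unitVec (jf w)) x) hcard pos2 sec2
        ub ub' i₀ ff ff' hi₀' hubsum hub'sum fmt2 fmt2'
      -- contradiction
      have hbne : b ≠ c := hbc
      have hpteq : uu + unitVec b = uu' + unitVec c := by
        funext l
        have hl : uu l - unitVec c l = uu' l - unitVec b l := congrFun heq l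
        simp only [Pi.add_apply]
        by_cases hlc : l = c
        · rw [hlc] at hl ⊢
          rw [unitVec_self, unitVec_ne (Ne.symm hbne)] at hl
          rw [unitVec_self, unitVec_ne (Ne.symm hbne)]
          omega
        · by_cases hlb : l = b
          · rw [hlb] at hl ⊢
            rw [unitVec_ne hbc, unitVec_self] at hl
            rw [unitVec_self, unitVec_ne hbc]
            omega
          · rw [unitVec_ne hlc, unitVec_ne hlb] at hl
            rw [unitVec_ne hlb, unitVec_ne hlc]
            omega
      have e1 : T (uu + unitVec b) i₀ = b := by
        rw [hff b i₀ hi₀, if_pos rfl]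
      have e2 : T (uu' + unitVec c) i₀ = c := by
        rw [hff' c i₀ hi₀, if_pos rfl]
      rw [hpteq, e2] at e1
      exact hbne e1.symm
    by_contra hne
    have hex : ∃ c, u c ≠ u' c := by
      by_contra hall
      push_neg at hall
      exact hne (funext hall)
    obtain ⟨c, hc⟩ := hex
    rcases lt_or_gt_of_ne hc with hlt | hlt
    · exact key u' u f' f hu' hu hf' hf c hlt
    · exact key u u' f f' hu hu' hf hf' c hlt

end ApexUnique

section PartOne
variable {n d : ℕ}

theorem LD_deltaUnion (T : (Fin d → ℕ) → Fin n → Fin d) (u : Fin d → ℕ) (i : Fin n) :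
    LD (deltaUnion T u) i
      = ((univ : Finset (Fin d)).image fun j => T (u + unitVec j) i).card := by
  unfold LD deltaUnion topeGraph
  rw [Finset.filter_biUnion]
  have h1 : ∀ j : Fin d,
      ((univ.image fun i' => (i', T (u + unitVec j) i')).filter fun e => e.1 = i)
        = {(i, T (u + unitVec j) i)} := by
    intro j
    ext e
    simp only [mem_filter, mem_image, mem_singleton, mem_univ, true_and]
    constructor
    · rintro ⟨⟨i', rfl⟩, he⟩
      simp only at he
      subst he
      rfl
    · rintro rfl
      exact ⟨⟨i, rfl⟩, rfl⟩
  have h2 : (univ.biUnion fun j =>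
      ((univ.image fun i' => (i', T (u + unitVec j) i')).filter fun e => e.1 = i))
        = univ.image fun j => ((i, T (u + unitVec j) i) : Fin n × Fin d) := by
    ext e
    simp only [mem_biUnion, mem_image, mem_univ, true_and, h1, mem_singleton]
    constructor
    · rintro ⟨j, hj⟩
      exact ⟨j, hj.symm⟩
    · rintro ⟨j, hj⟩
      exact ⟨j, hj.symm⟩
  rw [h2]
  rw [show (univ.image fun j => ((i, T (u + unitVec j) i) : Fin n × Fin d))
      = (univ.image fun j => T (u + unitVec j) i).image (fun b => (i, b)) from by
    rw [Finset.image_image]; rfl]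
  exact Finset.card_image_of_injective _ (fun a a' h => by simpa using congrArg Prod.snd h)

theorem propagate (T : (Fin d → ℕ) → Fin n → Fin d)
    (hsec : ∀ u (j j' : Fin d), (∑ k, u k) + 1 = n → ∀ i,
      T (u + unitVec j') i = j → T (u + unitVec j) i = j)
    (c : Fin d) (i0 : Fin n) :
    ∀ (M : ℕ) (y w : Fin d → ℕ), (∑ k, y k) = n → (∑ k, w k) = n →
      (∀ l, l ≠ c → w l ≤ y l) → (∑ l ∈ univ.erase c, (y l - w l)) ≤ M →
      T y i0 = c → T w i0 = c := by
  intro M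
  induction M with
  | zero =>
    intro y w hy hw hle hM hT
    have hz : ∀ l ∈ univ.erase c, y l - w l = 0 :=
      Finset.sum_eq_zero_iff.mp (Nat.le_antisymm hM (Nat.zero_le _))
    have hoff : ∀ l, l ≠ c → y l = w l := by
      intro l hl
      have h1 := hz l (mem_erase.2 ⟨hl, mem_univ l⟩)
      have h2 := hle l hl
      omega
    have heq : w = y := by
      funext l
      by_cases hl : l = c
      · have hsy := Finset.sum_erase_add univ y (mem_univ c)
        have hsw := Finset.sum_erase_add univ w (mem_univ c)
        have hse : ∑ k ∈ univ.erase c, y k = ∑ k ∈ univ.erase c, w k :=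
          Finset.sum_congr rfl fun k hk => hoff k (mem_erase.1 hk).1
        rw [hl]
        omega
      · exact (hoff l hl).symm
    rw [heq]
    exact hT
  | succ M ih =>
    intro y w hy hw hle hM hT
    by_cases hzero : (∑ l ∈ univ.erase c, (y l - w l)) = 0
    · exact ih y w hy hw hle (by omega) hT
    · obtain ⟨l, hlmem, hlne⟩ := Finset.exists_ne_zero_of_sum_ne_zero hzero
      have hlc : l ≠ c := (mem_erase.1 hlmem).1
      have hwl : w l < y l := by
        have := hle l hlc
        omega
      set ym : Fin d → ℕ := fun k => if k = l then y k - 1 else y k with hymdef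
      have hym : ym + unitVec l = y := by
        funext k
        simp only [Pi.add_apply, hymdef, unitVec]
        by_cases hk : k = l
        · rw [if_pos hk, if_pos hk, hk]
          omega
        · rw [if_neg hk, if_neg hk]
          omega
      have hsum_ym : (∑ k, ym k) + 1 = n := by
        have h1 := sum_add_unitVec ym l
        rw [hym] at h1
        omega
      have hTy2 : T (ym + unitVec c) i0 = c := by
        refine hsec ym c l hsum_ym i0 ?_
        rw [hym]
        exact hT
      have hy2sum : (∑ k, (ym + unitVec c) k) = n := by
        rw [sum_add_unitVec]
        omega
      have hy2val : ∀ k, k ≠ c → (ym + unitVec c) k = (if k = l then y k - 1 else y k) := by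
        intro k hk
        simp only [Pi.add_apply, hymdef]
        rw [unitVec_ne hk]
        omega
      have hle2 : ∀ k, k ≠ c → w k ≤ (ym + unitVec c) k := by
        intro k hk
        rw [hy2val k hk]
        by_cases hkl : k = l
        · rw [if_pos hkl, hkl]
          omega
        · rw [if_neg hkl]
          exact hle k hk
      have hmeas : (∑ k ∈ univ.erase c, ((ym + unitVec c) k - w k)) ≤ M := by
        have hd1 : (y l - w l) + ∑ k ∈ (univ.erase c).erase l, (y k - w k)
            = ∑ k ∈ univ.erase c, (y k - w k) :=
          Finset.add_sum_erase (univ.erase c) (fun k => y k - w k) hlmem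
        have hd2 : ((ym + unitVec c) l - w l) + ∑ k ∈ (univ.erase c).erase l, ((ym + unitVec c) k - w k)
            = ∑ k ∈ univ.erase c, ((ym + unitVec c) k - w k) :=
          Finset.add_sum_erase (univ.erase c) (fun k => (ym + unitVec c) k - w k) hlmem
        have htails : ∑ k ∈ (univ.erase c).erase l, ((ym + unitVec c) k - w k)
            = ∑ k ∈ (univ.erase c).erase l, (y k - w k) := by
          refine Finset.sum_congr rfl fun k hk => ?_
          obtain ⟨hkl, hkmem⟩ := mem_erase.1 hk
          have hkc := (mem_erase.1 hkmem).1
          rw [hy2val k hkc, if_neg hkl]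
        have hll : (ym + unitVec c) l - w l = (y l - 1) - w l := by
          rw [hy2val l hlc, if_pos rfl]
        omega
      exact ih (ym + unitVec c) w hy2sum hw hle2 hmeas hTy2

end PartOne

theorem statement10 {n d : ℕ} (hd : 2 ≤ d) (T : (Fin d → ℕ) → Fin n → Fin d)
    (hpos : ∀ v : Fin d → ℕ, (∑ j, v j) = n → topePos (T v) = v)
    (hsector : ∀ (u : Fin d → ℕ) (j j' : Fin d), (∑ k, u k) + 1 = n →
      ∀ i, T (u + unitVec j') i = j → T (u + unitVec j) i = j)
    (m : ℕ) (hm1 : 1 ≤ m) (hmn : m ≤ n) (s : Fin d → ℕ) (hs : (∑ j, s j) + m = n)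
    (S : Finset (Fin d → ℕ))
    (hS : ∀ u ∈ S, ((∑ j, u j) + 1 = n ∧ ∀ j, s j ≤ u j) ∧
      ∃ i0 : Fin n, LD (deltaUnion T u) i0 = d ∧
        ∀ i : Fin n, i ≠ i0 → LD (deltaUnion T u) i = 1) :
    S.card ≤ m := by
  classical
  have hd0 : 0 < d := by omega
  have hd1 : 1 < d := by omega
  have hn0 : 0 < n := by omega
  set c₁ : Fin d := ⟨0, hd0⟩ with hc₁
  set c₂ : Fin d := ⟨1, hd1⟩ with hc₂
  have hc12 : c₁ ≠ c₂ := by simp [hc₁, hc₂, Fin.ext_iff]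
  have hpos' : ∀ v, (∑ k, v k) = n → ∀ cc : Fin d,
      ((univ : Finset (Fin n)).filter fun i => T v i = cc).card = v cc := by
    intro v hv cc
    exact congrFun (hpos v hv) cc
  set wfun : ℕ → Fin d → ℕ :=
    fun t l => s l + (if l = c₁ then m - t else 0) + (if l = c₂ then t else 0) with hwfun
  have hwval1 : ∀ t, wfun t c₁ = s c₁ + (m - t) := by
    intro t
    show s c₁ + (if c₁ = c₁ then m - t else 0) + (if c₁ = c₂ then t else 0) = s c₁ + (m - t)
    rw [if_pos rfl, if_neg hc12]
    omega
  have hwval2 : ∀ t, wfun t c₂ = s c₂ + t := by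
    intro t
    show s c₂ + (if c₂ = c₁ then m - t else 0) + (if c₂ = c₂ then t else 0) = s c₂ + t
    rw [if_pos rfl, if_neg (Ne.symm hc12)]
    omega
  have hwvaloth : ∀ t, ∀ l, l ≠ c₁ → l ≠ c₂ → wfun t l = s l := by
    intro t l h1 h2
    show s l + (if l = c₁ then m - t else 0) + (if l = c₂ then t else 0) = s l
    rw [if_neg h1, if_neg h2]
    omega
  have hwsum : ∀ t : ℕ, t ≤ m → (∑ k, wfun t k) = n := by
    intro t ht
    show (∑ k, (s k + (if k = c₁ then m - t else 0) + (if k = c₂ then t else 0))) = n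
    rw [Finset.sum_add_distrib, Finset.sum_add_distrib]
    rw [Finset.sum_ite_eq' univ c₁ (fun _ => m - t), Finset.sum_ite_eq' univ c₂ (fun _ => t)]
    simp only [mem_univ, if_true]
    omega
  -- the nested chain
  have chainsub : ∀ t : ℕ, t ≤ m →
      (univ.filter fun i : Fin n => T (wfun t) i = c₁)
        ⊆ (univ.filter fun i : Fin n => T (wfun 0) i = c₁) := by
    intro t
    induction t with
    | zero => intro _; exact subset_rfl
    | succ t ih =>
      intro hlt
      have htm : t ≤ m := by omega
      refine subset_trans ?_ (ih htm)
      intro i hi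
      rw [mem_filter] at hi ⊢
      refine ⟨mem_univ i, ?_⟩
      set z : Fin d → ℕ :=
        fun l => s l + (if l = c₁ then m - (t + 1) else 0) + (if l = c₂ then t else 0) with hzdef
      have hzv1 : z c₁ = s c₁ + (m - (t + 1)) := by
        show s c₁ + (if c₁ = c₁ then m - (t + 1) else 0) + (if c₁ = c₂ then t else 0)
          = s c₁ + (m - (t + 1))
        rw [if_pos rfl, if_neg hc12]
        omega
      have hzv2 : z c₂ = s c₂ + t := by
        show s c₂ + (if c₂ = c₁ then m - (t + 1) else 0) + (if c₂ = c₂ then t else 0) = s c₂ + t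
        rw [if_pos rfl, if_neg (Ne.symm hc12)]
        omega
      have hzvoth : ∀ l, l ≠ c₁ → l ≠ c₂ → z l = s l := by
        intro l h1 h2
        show s l + (if l = c₁ then m - (t + 1) else 0) + (if l = c₂ then t else 0) = s l
        rw [if_neg h1, if_neg h2]
        omega
      have hz1 : z + unitVec c₁ = wfun t := by
        funext l
        simp only [Pi.add_apply]
        by_cases hl1 : l = c₁
        · rw [hl1, unitVec_self, hzv1, hwval1 t]
          omega
        · rw [unitVec_ne hl1]
          by_cases hl2 : l = c₂
          · rw [hl2, hzv2, hwval2 t]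
            omega
          · rw [hzvoth l hl1 hl2, hwvaloth t l hl1 hl2]
            omega
      have hz2 : z + unitVec c₂ = wfun (t + 1) := by
        funext l
        simp only [Pi.add_apply]
        by_cases hl2 : l = c₂
        · rw [hl2, unitVec_self, hzv2, hwval2 (t + 1)]
          omega
        · rw [unitVec_ne hl2]
          by_cases hl1 : l = c₁
          · rw [hl1, hzv1, hwval1 (t + 1)]
            omega
          · rw [hzvoth l hl1 hl2, hwvaloth (t + 1) l hl1 hl2]
            omega
      have hzs : (∑ k, z k) + 1 = n := by
        have h1 := sum_add_unitVec z c₁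
        rw [hz1] at h1
        rw [← hwsum t htm, ← h1]
      have hstep := hsector z c₁ c₂ hzs i (by rw [hz2]; exact hi.2)
      rw [← hz1]
      exact hstep
  have hF0card : (univ.filter fun i : Fin n => T (wfun 0) i = c₁).card = s c₁ + m := by
    rw [hpos' (wfun 0) (hwsum 0 (by omega)) c₁, hwval1 0]
    omega
  have hFmcard : (univ.filter fun i : Fin n => T (wfun m) i = c₁).card = s c₁ := by
    rw [hpos' (wfun m) (hwsum m le_rfl) c₁, hwval1 m]
    omega
  have hsubm := chainsub m le_rfl
  have hAcard : ((univ.filter fun i : Fin n => T (wfun 0) i = c₁)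
      \ (univ.filter fun i : Fin n => T (wfun m) i = c₁)).card = m := by
    rw [card_sdiff_of_subset hsubm, hF0card, hFmcard]
    omega
  -- apex extraction
  have hex : ∀ u : Fin d → ℕ, ∃ i0 : Fin n, u ∈ S →
      (∀ j, T (u + unitVec j) i0 = j) ∧
      (∀ i, i ≠ i0 → ∀ j j', T (u + unitVec j) i = T (u + unitVec j') i) := by
    intro u
    by_cases hu : u ∈ S
    · obtain ⟨⟨husum, _⟩, i0, hLD, hLD1⟩ := hS u hu
      refine ⟨i0, fun _ => ⟨?_, ?_⟩⟩
      · intro j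
        have himg : ((univ : Finset (Fin d)).image fun jj => T (u + unitVec jj) i0) = univ := by
          apply Finset.eq_univ_of_card
          rw [← LD_deltaUnion T u i0, hLD, Fintype.card_fin]
        have hjm : j ∈ (univ : Finset (Fin d)).image fun jj => T (u + unitVec jj) i0 := by
          rw [himg]; exact mem_univ j
        obtain ⟨j', _, hj'⟩ := mem_image.1 hjm
        exact hsector u j j' husum i0 hj'
      · intro i hi j j'
        have hcard : ((univ : Finset (Fin d)).image fun jj => T (u + unitVec jj) i).card ≤ 1 := by
          rw [← LD_deltaUnion T u i, hLD1 i hi]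
        exact Finset.card_le_one.mp hcard _ (mem_image_of_mem _ (mem_univ j))
          _ (mem_image_of_mem _ (mem_univ j'))
    · exact ⟨⟨0, hn0⟩, fun hc => absurd hc hu⟩
  choose ap hap using hex
  -- the apexes land in the m-element set
  have hmaps : ∀ u ∈ S, ap u ∈ (univ.filter fun i : Fin n => T (wfun 0) i = c₁)
      \ (univ.filter fun i : Fin n => T (wfun m) i = c₁) := by
    intro u hu
    obtain ⟨hapex, _⟩ := hap u hu
    obtain ⟨⟨husum, huge⟩, _⟩ := hS u hu
    have hprop1 : T (wfun 0) (ap u) = c₁ := by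
      refine propagate T hsector c₁ (ap u)
        (∑ l ∈ univ.erase c₁, ((u + unitVec c₁) l - wfun 0 l)) (u + unitVec c₁) (wfun 0)
        (by rw [sum_add_unitVec]; omega) (hwsum 0 (by omega)) ?_ le_rfl (hapex c₁)
      intro l hl
      have h1 : (u + unitVec c₁) l = u l := by
        simp only [Pi.add_apply]
        rw [unitVec_ne hl]
        omega
      rw [h1]
      by_cases hl2 : l = c₂
      · rw [hl2, hwval2 0]
        have := huge c₂
        omega
      · rw [hwvaloth 0 l hl hl2]
        exact huge l
    have hprop2 : T (wfun m) (ap u) = c₂ := by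
      refine propagate T hsector c₂ (ap u)
        (∑ l ∈ univ.erase c₂, ((u + unitVec c₂) l - wfun m l)) (u + unitVec c₂) (wfun m)
        (by rw [sum_add_unitVec]; omega) (hwsum m le_rfl) ?_ le_rfl (hapex c₂)
      intro l hl
      have h1 : (u + unitVec c₂) l = u l := by
        simp only [Pi.add_apply]
        rw [unitVec_ne hl]
        omega
      rw [h1]
      by_cases hl1 : l = c₁
      · rw [hl1, hwval1 m]
        have := huge c₁
        omega
      · rw [hwvaloth m l hl1 hl]
        exact huge l
    rw [mem_sdiff]
    refine ⟨mem_filter.2 ⟨mem_univ _, hprop1⟩, ?_⟩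
    intro hmem
    have hcc := (mem_filter.1 hmem).2
    rw [hprop2] at hcc
    exact hc12 hcc.symm
  -- the apex map is injective on S
  have hinj : ∀ u ∈ S, ∀ u' ∈ S, ap u = ap u' → u = u' := by
    intro u hu u' hu' hae
    obtain ⟨hapex, hconst⟩ := hap u hu
    obtain ⟨hapex', hconst'⟩ := hap u' hu'
    obtain ⟨⟨husum, _⟩, _⟩ := hS u hu
    obtain ⟨⟨husum', _⟩, _⟩ := hS u' hu'
    refine apexUnique hd n (univ : Finset (Fin n)) T (by rw [Finset.card_univ, Fintype.card_fin])
      (fun v hv cc => hpos' v hv cc)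
      (fun z j j' hz i _ hTi => hsector z j j' hz i hTi)
      u u' (ap u) (fun i => T (u + unitVec c₁) i) (fun i => T (u' + unitVec c₁) i)
      (mem_univ _) husum husum' ?_ ?_
    · intro jj x _
      by_cases hx : x = ap u
      · rw [if_pos hx, hx]
        exact hapex jj
      · rw [if_neg hx]
        exact hconst x hx jj c₁
    · intro jj x _
      by_cases hx : x = ap u
      · rw [if_pos hx, hx, hae]
        exact hapex' jj
      · rw [if_neg hx]
        refine hconst' x ?_ jj c₁
        rw [← hae]
        exact hx
  calc S.card ≤ ((univ.filter fun i : Fin n => T (wfun 0) i = c₁)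
      \ (univ.filter fun i : Fin n => T (wfun m) i = c₁)).card := by
        apply Finset.card_le_card_of_injOn ap hmaps
        intro u hu u' hu' h
        exact hinj u hu u' hu' h
    _ = m := hAcard
end

section
/- Let 𝒯 = {T_v} be an extended (n,d)-tope arrangement with n ≥ 2 and d ≥ 2. (i) (Contraction) For every j̄ ∈ [d̄], the topes T_v with v_j̄ = 0, viewed as topes between [n] and [d̄]∖{j̄}, form an extended (n, d−1)-tope arrangement. (ii) (Deletion) For every i ∈ [n], the restrictions T_v|_{[n]∖{i}} (delete vertex i and its incident edge) form an extended (n−1, d)-tope arrangement on [n]∖{i} and [d̄]: for each lattice point v' of (n−1)Δ^{d−1} there is exactly one graph among the restrictions with right degree vector v', and the restrictions are pairwise compatible. -/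
open Finset

open Function
section Core
variable {α β : Type*} [DecidableEq α] [DecidableEq β] [Fintype α]

def gGraph (f : α → β) : BGraph α β := Finset.univ.image fun i => (i, f i)

lemma mem_gGraph {f : α → β} {a : α} {b : β} : (a, b) ∈ gGraph f ↔ b = f a := by
  simp only [gGraph, Finset.mem_image, Finset.mem_univ, true_and, Prod.mk.injEq]
  constructor
  · rintro ⟨x, rfl, rfl⟩; rfl
  · rintro rfl; exact ⟨a, rfl, rfl⟩

def cnt (f : α → β) (j : β) : ℕ := (Finset.univ.filter fun i => f i = j).card

lemma cycle_not_compatible {f g : α → β} {k' : ℕ}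
    {c : Fin (k' + 2) → α} (hc : Function.Injective c)
    {z : Fin (k' + 2) → β} (hz : Function.Injective z)
    (hf : ∀ t, f (c t) = z (t + 1)) (hg : ∀ t, g (c t) = z t) :
    ¬ Compatible (gGraph f) (gGraph g) := by
  intro hcomp
  set M : BGraph α β := Finset.univ.image fun t => (c t, z (t + 1)) with hM
  set M' : BGraph α β := Finset.univ.image fun t => (c t, z t) with hM'
  set I : Finset α := Finset.univ.image c with hI
  set J : Finset β := Finset.univ.image z with hJ
  have memM : ∀ p, p ∈ M ↔ ∃ t, c t = p.1 ∧ z (t + 1) = p.2 := by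
    intro p; simp [hM, Prod.ext_iff]
  have memM' : ∀ p, p ∈ M' ↔ ∃ t, c t = p.1 ∧ z t = p.2 := by
    intro p; simp [hM', Prod.ext_iff]
  have hMG : M ⊆ gGraph f := by
    intro p hp
    obtain ⟨t, h1, h2⟩ := (memM p).1 hp
    have hp2 : p = (p.1, p.2) := rfl
    rw [hp2, mem_gGraph, ← h1, ← h2, hf]
  have hM'G : M' ⊆ gGraph g := by
    intro p hp
    obtain ⟨t, h1, h2⟩ := (memM' p).1 hp
    have hp2 : p = (p.1, p.2) := rfl
    rw [hp2, mem_gGraph, ← h1, ← h2, hg]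
  have hzshift : Function.Injective (fun t : Fin (k' + 2) => z (t + 1)) := by
    intro a b h
    have := hz h
    exact add_right_cancel this
  have hMmatch : IsMatching M I J := by
    refine ⟨?_, ?_, ?_⟩
    · intro e he
      obtain ⟨t, h1, h2⟩ := (memM e).1 he
      exact ⟨by rw [hI, Finset.mem_image]; exact ⟨t, Finset.mem_univ _, h1⟩,
        by rw [hJ, Finset.mem_image]; exact ⟨t + 1, Finset.mem_univ _, h2⟩⟩
    · intro a ha
      rw [hI, Finset.mem_image] at ha
      obtain ⟨t, -, rfl⟩ := ha
      refine ⟨z (t + 1), (memM _).2 ⟨t, rfl, rfl⟩, ?_⟩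
      intro b hb
      obtain ⟨s, h1, h2⟩ := (memM _).1 hb
      dsimp only at h1 h2
      rw [← h2, hc h1]
    · intro b hb
      rw [hJ, Finset.mem_image] at hb
      obtain ⟨u, -, rfl⟩ := hb
      refine ⟨c (u - 1), (memM _).2 ⟨u - 1, rfl, by rw [sub_add_cancel]⟩, ?_⟩
      intro a ha
      obtain ⟨s, h1, h2⟩ := (memM _).1 ha
      dsimp only at h1 h2
      have hsu : s + 1 = u := hz h2
      rw [← h1, ← hsu]; congr 1; rw [add_sub_cancel_right]
  have hM'match : IsMatching M' I J := by
    refine ⟨?_, ?_, ?_⟩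
    · intro e he
      obtain ⟨t, h1, h2⟩ := (memM' e).1 he
      exact ⟨by rw [hI, Finset.mem_image]; exact ⟨t, Finset.mem_univ _, h1⟩,
        by rw [hJ, Finset.mem_image]; exact ⟨t, Finset.mem_univ _, h2⟩⟩
    · intro a ha
      rw [hI, Finset.mem_image] at ha
      obtain ⟨t, -, rfl⟩ := ha
      refine ⟨z t, (memM' _).2 ⟨t, rfl, rfl⟩, ?_⟩
      intro b hb
      obtain ⟨s, h1, h2⟩ := (memM' _).1 hb
      dsimp only at h1 h2
      rw [← h2, hc h1]
    · intro b hb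
      rw [hJ, Finset.mem_image] at hb
      obtain ⟨u, -, rfl⟩ := hb
      refine ⟨c u, (memM' _).2 ⟨u, rfl, rfl⟩, ?_⟩
      intro a ha
      obtain ⟨s, h1, h2⟩ := (memM' _).1 ha
      dsimp only at h1 h2
      rw [← h1, hz h2]
  have hMeq : M = M' := hcomp I J M M' hMG hM'G hMmatch hM'match
  have h0 : ((c 0, z 1) : α × β) ∈ M := (memM _).2 ⟨0, rfl, by rw [zero_add]⟩
  rw [hMeq] at h0
  obtain ⟨s, h1, h2⟩ := (memM' _).1 h0
  dsimp only at h1 h2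
  have hs0 : s = 0 := hc h1
  rw [hs0] at h2
  have : (1 : Fin (k' + 2)) = 0 := (hz h2).symm
  exact absurd (congrArg Fin.val this) (by simp [Fin.val_one])

end Core

section Push
variable {α β α' β' : Type*} [DecidableEq α] [DecidableEq β] [DecidableEq α'] [DecidableEq β']

lemma IsMatching.image_map {u : α → α'} {w : β → β'} (hu : Injective u) (hw : Injective w)
    {M : BGraph α β} {I : Finset α} {J : Finset β} (h : IsMatching M I J) :
    IsMatching (M.image (Prod.map u w)) (I.image u) (J.image w) := by
  obtain ⟨hIJ, hA, hB⟩ := h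
  refine ⟨?_, ?_, ?_⟩
  · intro e he
    rw [Finset.mem_image] at he
    obtain ⟨p, hp, rfl⟩ := he
    obtain ⟨h1, h2⟩ := hIJ p hp
    exact ⟨Finset.mem_image_of_mem u h1, Finset.mem_image_of_mem w h2⟩
  · intro a' ha'
    rw [Finset.mem_image] at ha'
    obtain ⟨a, ha, rfl⟩ := ha'
    obtain ⟨b, hb, hbu⟩ := hA a ha
    refine ⟨w b, Finset.mem_image.2 ⟨(a, b), hb, rfl⟩, ?_⟩
    intro b' hb'
    rw [Finset.mem_image] at hb'
    obtain ⟨⟨x, y⟩, hxy, hpe⟩ := hb'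
    have h1 : u x = u a := congrArg Prod.fst hpe
    have h2 : w y = b' := congrArg Prod.snd hpe
    rw [hu h1] at hxy
    rw [← h2, hbu y hxy]
  · intro b' hb'
    rw [Finset.mem_image] at hb'
    obtain ⟨b, hb, rfl⟩ := hb'
    obtain ⟨a, ha, hau⟩ := hB b hb
    refine ⟨u a, Finset.mem_image.2 ⟨(a, b), ha, rfl⟩, ?_⟩
    intro a' ha'
    rw [Finset.mem_image] at ha'
    obtain ⟨⟨x, y⟩, hxy, hpe⟩ := ha'
    have h1 : u x = a' := congrArg Prod.fst hpe
    have h2 : w y = w b := congrArg Prod.snd hpe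
    rw [hw h2] at hxy
    rw [← h1, hau x hxy]

lemma Compatible.pullback {u : α → α'} {w : β → β'} (hu : Injective u) (hw : Injective w)
    {G H : BGraph α β} {G' H' : BGraph α' β'}
    (hG : ∀ p ∈ G, Prod.map u w p ∈ G') (hH : ∀ p ∈ H, Prod.map u w p ∈ H')
    (hc : Compatible G' H') : Compatible G H := by
  intro I J M M' hMG hM'H hM hM'
  have hmap : Injective (Prod.map u w) := fun p q h =>
    Prod.ext (hu (congrArg Prod.fst h)) (hw (congrArg Prod.snd h))
  have heq := hc (I.image u) (J.image w) (M.image (Prod.map u w)) (M'.image (Prod.map u w))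
    (by intro p hp; rw [Finset.mem_image] at hp; obtain ⟨q, hq, rfl⟩ := hp; exact hG q (hMG hq))
    (by intro p hp; rw [Finset.mem_image] at hp; obtain ⟨q, hq, rfl⟩ := hp; exact hH q (hM'H hq))
    (hM.image_map hu hw) (hM'.image_map hu hw)
  exact Finset.image_injective hmap heq

end Push

section Extract
variable {α β : Type*} [DecidableEq α] [DecidableEq β] [Fintype α]

lemma val_add_one' {m : ℕ} (x : Fin (m + 1)) :
    ((x + 1 : Fin (m + 1))).val = if x.val = m then 0 else x.val + 1 := by
  rw [Fin.val_add_one]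
  rcases eq_or_ne x (Fin.last m) with h | h
  · simp [h, Fin.val_last]
  · have hv : x.val ≠ m := fun hh => h (Fin.ext hh)
    simp [h, hv]

lemma walk_not_compatible {f g : α → β} :
    ∀ m : ℕ, ∀ c : Fin (m + 1) → α, Function.Injective c →
    (∀ t, f (c t) = g (c (t + 1))) → (∀ t, f (c t) ≠ g (c t)) →
    ¬ Compatible (gGraph f) (gGraph g) := by
  intro m
  induction m using Nat.strong_induction_on with
  | _ m IH =>
    intro c hc hrel hnd
    rcases m with _ | m
    · have h0 := hrel 0
      rw [Subsingleton.elim ((0 : Fin 1) + 1) 0] at h0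
      exact absurd h0 (hnd 0)
    by_cases hzinj : Function.Injective fun t : Fin (m + 2) => g (c t)
    · exact cycle_not_compatible hc hzinj (fun t => hrel t) (fun t => rfl)
    · rw [Function.Injective] at hzinj
      push_neg at hzinj
      obtain ⟨s, t, hgst, hne⟩ := hzinj
      have hts : t - s ≠ 0 := sub_ne_zero.mpr (Ne.symm hne)
      have hl0 : (t - s).val ≠ 0 := fun h => hts (Fin.ext h)
      obtain ⟨l', hl'⟩ : ∃ l', (t - s).val = l' + 1 := ⟨(t - s).val - 1, by omega⟩
      have hlm : l' + 1 < m + 2 := hl' ▸ (t - s).isLt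
      have hle : l' + 1 ≤ m + 2 := hlm.le
      set c' : Fin (l' + 1) → α := fun u => c (s + Fin.castLE hle u) with hc'def
      have hc'inj : Function.Injective c' := by
        intro a b h
        exact Fin.castLE_injective _ (add_left_cancel (hc h))
      have hrel' : ∀ u, f (c' u) = g (c' (u + 1)) := by
        intro u
        have base := hrel (s + Fin.castLE hle u)
        by_cases hu : u.val < l'
        · have hcast : Fin.castLE hle (u + 1) = Fin.castLE hle u + 1 := by
            apply Fin.ext
            rw [Fin.coe_castLE, val_add_one', val_add_one', Fin.coe_castLE]
            rw [if_neg (by omega), if_neg (by omega)]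
          show f (c (s + Fin.castLE hle u)) = g (c (s + Fin.castLE hle (u + 1)))
          rw [hcast, ← add_assoc]
          exact base
        · have hu' : u.val = l' := by have := u.isLt; omega
          have h1 : (u + 1 : Fin (l' + 1)) = 0 := by
            apply Fin.ext
            rw [val_add_one', if_pos hu']
            rfl
          have h2 : Fin.castLE hle u + 1 = t - s := by
            apply Fin.ext
            rw [val_add_one', Fin.coe_castLE, if_neg (by omega)]
            omega
          have h3 : s + Fin.castLE hle u + 1 = t := by
            rw [add_assoc, h2]
            abel
          calc f (c' u) = g (c (s + Fin.castLE hle u + 1)) := base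
            _ = g (c t) := by rw [h3]
            _ = g (c s) := hgst.symm
            _ = g (c' (u + 1)) := by
                rw [h1]
                show g (c s) = g (c (s + Fin.castLE hle 0))
                norm_num
      have hnd' : ∀ u, f (c' u) ≠ g (c' u) := fun u => hnd _
      exact IH l' (by omega) c' hc'inj hrel' hnd'

end Extract

section Walk
variable {α β : Type*} [DecidableEq α] [DecidableEq β] [Fintype α]

lemma exists_walk {f g : α → β}
    (hcnt : ∀ j, cnt f j = cnt g j) {i1 : α} (h1 : f i1 ≠ g i1) :
    ∃ (m : ℕ) (c : Fin (m + 1) → α), Function.Injective c ∧ c 0 = i1 ∧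
      (∀ t, f (c t) ≠ g (c t)) ∧ (∀ t, f (c t) = g (c (t + 1))) := by
  classical
  set S : Finset α := Finset.univ.filter (fun i => f i ≠ g i) with hS
  have hScnt : ∀ j, (S.filter fun i => f i = j).card = (S.filter fun i => g i = j).card := by
    intro j
    have hf' := Finset.card_filter_add_card_filter_not
      (s := Finset.univ.filter fun i => f i = j) (p := fun i => f i ≠ g i)
    have hg' := Finset.card_filter_add_card_filter_not
      (s := Finset.univ.filter fun i => g i = j) (p := fun i => f i ≠ g i)
    have e1 : (Finset.univ.filter fun i => f i = j).filter (fun i => f i ≠ g i)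
        = S.filter fun i => f i = j := by
      ext i; simp only [Finset.mem_filter, Finset.mem_univ, true_and, hS]; tauto
    have e2 : (Finset.univ.filter fun i => g i = j).filter (fun i => f i ≠ g i)
        = S.filter fun i => g i = j := by
      ext i; simp only [Finset.mem_filter, Finset.mem_univ, true_and, hS]; tauto
    have e3 : (Finset.univ.filter fun i => f i = j).filter (fun i => ¬ f i ≠ g i)
        = (Finset.univ.filter fun i => g i = j).filter (fun i => ¬ f i ≠ g i) := by
      ext i
      simp only [Finset.mem_filter, Finset.mem_univ, true_and, not_not]
      constructor
      · rintro ⟨h1', h2'⟩; exact ⟨h2' ▸ h1', h2'⟩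
      · rintro ⟨h1', h2'⟩; exact ⟨h2' ▸ h1', h2'⟩
    rw [e1] at hf'
    rw [e2] at hg'
    have hc1 : cnt f j = (Finset.univ.filter fun i => f i = j).card := rfl
    have hc2 : cnt g j = (Finset.univ.filter fun i => g i = j).card := rfl
    have := hcnt j
    rw [hc1, hc2, ← hf', ← hg', e3] at this
    omega
  have hcard : ∀ j : β, Fintype.card {x : {i // i ∈ S} // f ↑x = j}
      = Fintype.card {x : {i // i ∈ S} // g ↑x = j} := by
    intro j
    have e1 : {x : {i // i ∈ S} // f ↑x = j} ≃ {i // i ∈ S.filter fun i => f i = j} :=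
      (Equiv.subtypeSubtypeEquivSubtypeInter (fun i : α => i ∈ S) (fun i => f i = j)).trans
        (Equiv.subtypeEquivRight (fun i =>
          (Finset.mem_filter (s := S) (p := fun i => f i = j) (a := i)).symm))
    have e2 : {x : {i // i ∈ S} // g ↑x = j} ≃ {i // i ∈ S.filter fun i => g i = j} :=
      (Equiv.subtypeSubtypeEquivSubtypeInter (fun i : α => i ∈ S) (fun i => g i = j)).trans
        (Equiv.subtypeEquivRight (fun i =>
          (Finset.mem_filter (s := S) (p := fun i => g i = j) (a := i)).symm))
    rw [Fintype.card_congr e1, Fintype.card_congr e2, Fintype.card_coe, Fintype.card_coe,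
      hScnt]
  set σ : {i // i ∈ S} ≃ {i // i ∈ S} :=
    Equiv.ofFiberEquiv (f := fun x : {i // i ∈ S} => f ↑x) (g := fun x => g ↑x)
      (fun j => Fintype.equivOfCardEq (hcard j)) with hσ
  have hσp : ∀ x, g ↑(σ x) = f ↑x := by
    intro x
    rw [hσ]
    exact Equiv.ofFiberEquiv_map (f := fun x : {i // i ∈ S} => f ↑x)
      (g := fun x : {i // i ∈ S} => g ↑x) (fun j => Fintype.equivOfCardEq (hcard j)) x
  have hx0 : i1 ∈ S := by
    rw [hS, Finset.mem_filter]
    exact ⟨Finset.mem_univ _, h1⟩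
  set x0 : {i // i ∈ S} := ⟨i1, hx0⟩ with hx0def
  have hper : x0 ∈ Function.periodicPts ⇑σ := by
    rw [Function.mem_periodicPts]
    refine ⟨orderOf σ, orderOf_pos σ, ?_⟩
    show (⇑σ)^[orderOf σ] x0 = x0
    rw [Equiv.Perm.iterate_eq_pow, pow_orderOf_eq_one]
    rfl
  have hmp1 : 1 ≤ Function.minimalPeriod ⇑σ x0 :=
    Function.minimalPeriod_pos_of_mem_periodicPts hper
  obtain ⟨m, hm⟩ : ∃ m, Function.minimalPeriod ⇑σ x0 = m + 1 :=
    ⟨Function.minimalPeriod ⇑σ x0 - 1, by omega⟩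
  refine ⟨m, fun t => ↑((⇑σ)^[t.val] x0), ?_, rfl, ?_, ?_⟩
  · intro a b h
    have h2 : (⇑σ)^[a.val] x0 = (⇑σ)^[b.val] x0 := Subtype.coe_injective h
    have h3 := Function.iterate_injOn_Iio_minimalPeriod (f := ⇑σ) (x := x0)
      (by rw [hm]; exact Set.mem_Iio.2 a.isLt) (by rw [hm]; exact Set.mem_Iio.2 b.isLt) h2
    exact Fin.ext h3
  · intro t
    have hmem := ((⇑σ)^[t.val] x0).2
    exact (Finset.mem_filter.1 hmem).2
  · intro t
    have hstep : (⇑σ)^[((t + 1 : Fin (m + 1))).val] x0 = σ ((⇑σ)^[t.val] x0) := by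
      rw [val_add_one']
      by_cases ht : t.val = m
      · have hsucc : σ ((⇑σ)^[t.val] x0) = (⇑σ)^[t.val + 1] x0 :=
          (Function.iterate_succ_apply' (⇑σ) t.val x0).symm
        rw [if_pos ht, hsucc, ht, ← hm, Function.iterate_minimalPeriod]
        rfl
      · rw [if_neg ht]
        exact Function.iterate_succ_apply' ⇑σ t.val x0
    calc f ↑((⇑σ)^[t.val] x0) = g ↑(σ ((⇑σ)^[t.val] x0)) := (hσp _).symm
      _ = g ↑((⇑σ)^[((t + 1 : Fin (m + 1))).val] x0) := by rw [hstep]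

end Walk



section TopeAux

lemma topePos_restrict {n d : ℕ} (S : Fin (n + 2) → Fin (d + 2)) (i0 : Fin (n + 2))
    (j : Fin (d + 2)) :
    topePos S j = (if S i0 = j then 1 else 0) + topePos (S ∘ i0.succAbove) j := by
  have h2 : topePos (S ∘ i0.succAbove) j
      = ∑ i : Fin (n + 1), if S (i0.succAbove i) = j then 1 else 0 := by
    show (Finset.univ.filter fun i => (S ∘ i0.succAbove) i = j).card = _
    rw [Finset.card_filter]
    rfl
  rw [h2]
  show (Finset.univ.filter fun i => S i = j).card = _
  rw [Finset.card_filter]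
  exact Fin.sum_univ_succAbove (fun i => if S i = j then 1 else 0) i0

lemma topePos_eq_zero {n d : ℕ} {S : Fin n → Fin d} {j : Fin d}
    (h : topePos S j = 0) (i : Fin n) : S i ≠ j := by
  intro hij
  have hmem : i ∈ Finset.univ.filter fun i => S i = j :=
    Finset.mem_filter.2 ⟨Finset.mem_univ _, hij⟩
  rw [Finset.card_eq_zero.1 h] at hmem
  exact absurd hmem (Finset.notMem_empty i)

end TopeAux

section Parts
variable {n d : ℕ}

lemma part_one
    (T : (Fin (d + 2) → ℕ) → Fin (n + 2) → Fin (d + 2))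
    (hpos : ∀ v : Fin (d + 2) → ℕ, (∑ j, v j) = n + 2 → topePos (T v) = v)
    (hcompat : ∀ v v' : Fin (d + 2) → ℕ, (∑ j, v j) = n + 2 → (∑ j, v' j) = n + 2 →
      Compatible (topeGraph (T v)) (topeGraph (T v')))
    (j0 : Fin (d + 2)) :
    ∃ T' : (Fin (d + 1) → ℕ) → Fin (n + 2) → Fin (d + 1),
      (∀ v' : Fin (d + 1) → ℕ, (∑ j, v' j) = n + 2 → topePos (T' v') = v') ∧
      (∀ v' w' : Fin (d + 1) → ℕ, (∑ j, v' j) = n + 2 → (∑ j, w' j) = n + 2 →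
        Compatible (topeGraph (T' v')) (topeGraph (T' w'))) ∧
      (∀ v : Fin (d + 2) → ℕ, (∑ j, v j) = n + 2 → v j0 = 0 →
        ∀ i, j0.succAbove (T' (v ∘ j0.succAbove) i) = T v i) := by
  classical
  set extv : (Fin (d + 1) → ℕ) → (Fin (d + 2) → ℕ) := fun v' => j0.insertNth 0 v' with hextv
  have hsum : ∀ v' : Fin (d + 1) → ℕ, (∑ j, v' j) = n + 2 → (∑ j, extv v' j) = n + 2 := by
    intro v' hv'
    rw [Fin.sum_univ_succAbove (extv v') j0]
    rw [hextv]
    simp only [Fin.insertNth_apply_same, Fin.insertNth_apply_succAbove, zero_add]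
    exact hv'
  set unJ : Fin (d + 2) → Fin (d + 1) := fun x => ((finSuccEquiv' j0) x).getD 0 with hunJ
  have unJ_sA : ∀ y, unJ (j0.succAbove y) = y := by
    intro y
    rw [hunJ]
    simp [finSuccEquiv'_succAbove]
  have unJ_spec : ∀ x, x ≠ j0 → j0.succAbove (unJ x) = x := by
    intro x hx
    obtain ⟨y, rfl⟩ := Fin.exists_succAbove_eq hx
    rw [unJ_sA]
  have hzero : ∀ v : Fin (d + 2) → ℕ, (∑ j, v j) = n + 2 → v j0 = 0 →
      ∀ i, T v i ≠ j0 := by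
    intro v hv hv0 i
    have h := congrFun (hpos v hv) j0
    rw [hv0] at h
    exact topePos_eq_zero h i
  have hzero' : ∀ v' : Fin (d + 1) → ℕ, (∑ j, v' j) = n + 2 →
      ∀ i, T (extv v') i ≠ j0 := by
    intro v' hv' i
    refine hzero _ (hsum v' hv') ?_ i
    rw [hextv]
    exact Fin.insertNth_apply_same (α := fun _ => ℕ) j0 0 v'
  refine ⟨fun v' i => unJ (T (extv v') i), ?_, ?_, ?_⟩
  · intro v' hv'
    funext j
    show (Finset.univ.filter fun i => unJ (T (extv v') i) = j).card = v' j
    have hfc : (Finset.univ.filter fun i => unJ (T (extv v') i) = j)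
        = (Finset.univ.filter fun i => T (extv v') i = j0.succAbove j) := by
      apply Finset.filter_congr
      intro i _
      constructor
      · intro h
        rw [← h]
        exact (unJ_spec _ (hzero' v' hv' i)).symm
      · intro h
        rw [h, unJ_sA]
    rw [hfc]
    have := congrFun (hpos (extv v') (hsum v' hv')) (j0.succAbove j)
    rw [show ((Finset.univ.filter fun i => T (extv v') i = j0.succAbove j).card)
      = topePos (T (extv v')) (j0.succAbove j) from rfl, this, hextv]
    exact Fin.insertNth_apply_succAbove (α := fun _ => ℕ) j0 0 v' j
  · intro v' w' hv' hw'
    refine Compatible.pullback (u := id) (w := j0.succAbove)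
      (fun a b h => h) Fin.succAbove_right_injective ?_ ?_
      (hcompat (extv v') (extv w') (hsum v' hv') (hsum w' hw'))
    · intro p hp
      obtain ⟨i, -, rfl⟩ := Finset.mem_image.1 hp
      show ((i : Fin (n + 2)), j0.succAbove (unJ (T (extv v') i))) ∈ topeGraph (T (extv v'))
      rw [unJ_spec _ (hzero' v' hv' i)]
      exact Finset.mem_image.2 ⟨i, Finset.mem_univ _, rfl⟩
    · intro p hp
      obtain ⟨i, -, rfl⟩ := Finset.mem_image.1 hp
      show ((i : Fin (n + 2)), j0.succAbove (unJ (T (extv w') i))) ∈ topeGraph (T (extv w'))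
      rw [unJ_spec _ (hzero' w' hw' i)]
      exact Finset.mem_image.2 ⟨i, Finset.mem_univ _, rfl⟩
  · intro v hv hv0 i
    have hrm : extv (v ∘ j0.succAbove) = v := by
      rw [hextv]
      have : (0 : ℕ) = v j0 := hv0.symm
      rw [this]
      exact Fin.insertNth_self_removeNth j0 v
    show j0.succAbove (unJ (T (extv (v ∘ j0.succAbove)) i)) = T v i
    rw [hrm]
    exact unJ_spec _ (hzero v hv hv0 i)

end Parts

section PartTwo
variable {n d : ℕ}

lemma part_two
    (T : (Fin (d + 2) → ℕ) → Fin (n + 2) → Fin (d + 2))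
    (hpos : ∀ v : Fin (d + 2) → ℕ, (∑ j, v j) = n + 2 → topePos (T v) = v)
    (hcompat : ∀ v v' : Fin (d + 2) → ℕ, (∑ j, v j) = n + 2 → (∑ j, v' j) = n + 2 →
      Compatible (topeGraph (T v)) (topeGraph (T v')))
    (i0 : Fin (n + 2)) :
    (∀ v' : Fin (d + 2) → ℕ, (∑ j, v' j) = n + 1 →
        ∃ v : Fin (d + 2) → ℕ, ((∑ j, v j) = n + 2) ∧
          topePos (T v ∘ i0.succAbove) = v') ∧
      (∀ v w : Fin (d + 2) → ℕ, (∑ j, v j) = n + 2 → (∑ j, w j) = n + 2 →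
        topePos (T v ∘ i0.succAbove) = topePos (T w ∘ i0.succAbove) →
        T v ∘ i0.succAbove = T w ∘ i0.succAbove) ∧
      (∀ v w : Fin (d + 2) → ℕ, (∑ j, v j) = n + 2 → (∑ j, w j) = n + 2 →
        Compatible (topeGraph (T v ∘ i0.succAbove))
          (topeGraph (T w ∘ i0.succAbove))) := by
  classical
  have hcompat' : ∀ v w : Fin (d + 2) → ℕ, (∑ j, v j) = n + 2 → (∑ j, w j) = n + 2 →
      Compatible (topeGraph (T v ∘ i0.succAbove)) (topeGraph (T w ∘ i0.succAbove)) := by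
    intro v w hv hw
    refine Compatible.pullback (u := i0.succAbove) (w := id)
      Fin.succAbove_right_injective (fun a b h => h) ?_ ?_ (hcompat v w hv hw)
    · intro p hp
      obtain ⟨i, -, rfl⟩ := Finset.mem_image.1 hp
      exact Finset.mem_image.2 ⟨i0.succAbove i, Finset.mem_univ _, rfl⟩
    · intro p hp
      obtain ⟨i, -, rfl⟩ := Finset.mem_image.1 hp
      exact Finset.mem_image.2 ⟨i0.succAbove i, Finset.mem_univ _, rfl⟩
  refine ⟨?_, ?_, hcompat'⟩
  · -- existence
    intro v' hv'
    have hsumj : ∀ j : Fin (d + 2), (∑ j', (v' j' + unitVec j j')) = n + 2 := by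
      intro j
      rw [Finset.sum_add_distrib, hv']
      have h1 : (∑ j', unitVec j j') = 1 := by
        simp [unitVec]
      rw [h1]
    have claim : ∃ j : Fin (d + 2), T (fun j' => v' j' + unitVec j j') i0 = j := by
      by_contra hno
      push_neg at hno
      set j1 : Fin (d + 2) := 0 with hj1
      set F := T (fun j' => v' j' + unitVec j1 j') with hF
      set j2 := F i0 with hj2
      have hj21 : j2 ≠ j1 := hno j1
      set G := T (fun j' => v' j' + unitVec j2 j') with hG
      set j3 := G i0 with hj3
      have hj32 : j3 ≠ j2 := hno j2
      have hFpos : topePos F = fun j' => v' j' + unitVec j1 j' := hpos _ (hsumj j1)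
      have hGpos : topePos G = fun j' => v' j' + unitVec j2 j' := hpos _ (hsumj j2)
      have hcard1 : (Finset.univ.filter fun i => F i = j1).card = v' j1 + 1 := by
        have h := congrFun hFpos j1
        rw [show topePos F j1 = (Finset.univ.filter fun i => F i = j1).card from rfl] at h
        rw [h]
        simp [unitVec]
      obtain ⟨istar, histar⟩ : ∃ istar, F istar = j1 := by
        have hp' : 0 < (Finset.univ.filter fun i => F i = j1).card := by omega
        obtain ⟨i, hi⟩ := Finset.card_pos.1 hp'
        exact ⟨i, (Finset.mem_filter.1 hi).2⟩
      have hisne : istar ≠ i0 := by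
        intro h
        rw [h, ← hj2] at histar
        exact hj21 histar
      set f' := Function.update F istar j2 with hf'
      have hupd : f' istar = j2 := by
        rw [hf']
        exact Function.update_self istar j2 F
      have hf'i0 : f' i0 = j2 := by
        rw [hf', Function.update_of_ne (Ne.symm hisne)]
      have hcnt' : ∀ j, cnt f' j = cnt G j := by
        intro j
        have hGj : cnt G j = v' j + unitVec j2 j := congrFun hGpos j
        have hFj : cnt F j = v' j + unitVec j1 j := congrFun hFpos j
        rw [hGj]
        rcases eq_or_ne j j2 with rfl | hne2
        · have hset : (Finset.univ.filter fun i => f' i = j2)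
              = insert istar (Finset.univ.filter fun i => F i = j2) := by
            ext i
            simp only [Finset.mem_filter, Finset.mem_univ, true_and, Finset.mem_insert]
            rcases eq_or_ne i istar with rfl | hi
            · simp [hf', Function.update_self]
            · rw [hf', Function.update_of_ne hi]
              exact ⟨Or.inr, fun h => h.resolve_left hi⟩
          show (Finset.univ.filter fun i => f' i = j2).card = _
          rw [hset, Finset.card_insert_of_notMem (by
            simp only [Finset.mem_filter, Finset.mem_univ, true_and]
            rw [histar]
            exact Ne.symm hj21)]
          have hc2 : (Finset.univ.filter fun i => F i = j2).card = v' j2 := by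
            have h := hFj
            rw [show cnt F j2 = (Finset.univ.filter fun i => F i = j2).card from rfl] at h
            rw [h]
            simp [unitVec, hj21]
          rw [hc2]
          simp [unitVec]
        rcases eq_or_ne j j1 with rfl | hne1
        · have hset : (Finset.univ.filter fun i => f' i = j1)
              = (Finset.univ.filter fun i => F i = j1).erase istar := by
            ext i
            simp only [Finset.mem_filter, Finset.mem_univ, true_and, Finset.mem_erase]
            rcases eq_or_ne i istar with rfl | hi
            · simp only [hf', Function.update_self]
              exact ⟨fun h => absurd h hj21, fun h => absurd rfl h.1⟩
            · rw [hf', Function.update_of_ne hi]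
              exact ⟨fun h => ⟨hi, h⟩, fun h => h.2⟩
          show (Finset.univ.filter fun i => f' i = j1).card = _
          rw [hset, Finset.card_erase_of_mem (by
            simp only [Finset.mem_filter, Finset.mem_univ, true_and]
            exact histar), hcard1]
          simp [unitVec, Ne.symm hj21]
        · have hset : (Finset.univ.filter fun i => f' i = j)
              = (Finset.univ.filter fun i => F i = j) := by
            ext i
            simp only [Finset.mem_filter, Finset.mem_univ, true_and]
            rcases eq_or_ne i istar with rfl | hi
            · rw [hf', Function.update_self, histar]
              exact ⟨fun h => absurd h (Ne.symm hne2), fun h => absurd h (Ne.symm hne1)⟩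
            · rw [hf', Function.update_of_ne hi]
          show (Finset.univ.filter fun i => f' i = j).card = _
          rw [hset]
          have h := hFj
          rw [show cnt F j = (Finset.univ.filter fun i => F i = j).card from rfl] at h
          rw [h]
          simp [unitVec, hne1, hne2]
      have h1' : f' i0 ≠ G i0 := by
        rw [hf'i0, ← hj3]
        exact Ne.symm hj32
      obtain ⟨m, c, hcinj, hc0, hnd, hrel⟩ := exists_walk hcnt' h1'
      by_cases hin : ∃ s, c s = istar
      · -- segment avoiding istar
        obtain ⟨s, hs⟩ := hin
        have hs0 : s ≠ 0 := by
          intro h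
          rw [h, hc0] at hs
          exact hisne hs.symm
        have hsv : 1 ≤ s.val := by
          rcases Nat.eq_zero_or_pos s.val with h | h
          · exact absurd (Fin.ext h) hs0
          · exact h
        have hm1 : 1 ≤ m := by
          have := s.isLt
          omega
        obtain ⟨m', rfl⟩ : ∃ m', m = m' + 1 := ⟨m - 1, by omega⟩
        rcases Nat.lt_or_ge s.val (m' + 1) with hslt | hsge
        · -- proper segment
          obtain ⟨l', hl'⟩ : ∃ l', (m' + 2) - s.val = l' + 1 + 1 :=
            ⟨m' - s.val, by omega⟩
          have hle : l' + 1 + 1 ≤ m' + 2 := by omega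
          have hlsum : s.val + 1 + (l' + 1) = m' + 2 := by have := s.isLt; omega
          have heeval : ∀ u : Fin (l' + 1 + 1),
              ((s + 1 + Fin.castLE hle u : Fin (m' + 2))).val
                = (s.val + 1 + u.val) % (m' + 2) := by
            intro u
            rw [Fin.val_add, Fin.val_add, Fin.val_one, Fin.coe_castLE, Nat.mod_add_mod]
          have hccinj : Function.Injective
              (fun u : Fin (l' + 1 + 1) => c (s + 1 + Fin.castLE hle u)) := by
            intro a b h
            exact Fin.castLE_injective _ (add_left_cancel (hcinj h))
          have hccne : ∀ u : Fin (l' + 1 + 1), c (s + 1 + Fin.castLE hle u) ≠ istar := by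
            intro u h
            rw [← hs] at h
            have h3 := congrArg Fin.val (hcinj h)
            rw [heeval] at h3
            have hu := u.isLt
            rcases Nat.lt_or_ge (s.val + 1 + u.val) (m' + 2) with hlt | hge
            · rw [Nat.mod_eq_of_lt hlt] at h3
              omega
            · have heq2 : s.val + 1 + u.val = m' + 2 := by omega
              rw [heq2, Nat.mod_self] at h3
              omega
          have hccF : ∀ u : Fin (l' + 1 + 1),
              f' (c (s + 1 + Fin.castLE hle u)) = F (c (s + 1 + Fin.castLE hle u)) := by
            intro u
            rw [hf']
            exact Function.update_of_ne (hccne u) j2 F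
          have hrel' : ∀ u : Fin (l' + 1 + 1),
              F (c (s + 1 + Fin.castLE hle u)) = G (c (s + 1 + Fin.castLE hle (u + 1))) := by
            intro u
            by_cases hu : u.val < l' + 1
            · have hval_u1 : ((u + 1 : Fin (l' + 1 + 1))).val = u.val + 1 := by
                rw [val_add_one', if_neg (by omega)]
              have hR0 : ((s + 1 + Fin.castLE hle u : Fin (m' + 2))).val
                  = s.val + 1 + u.val := by
                rw [heeval]
                exact Nat.mod_eq_of_lt (by omega)
              have hcast : (s + 1 + Fin.castLE hle (u + 1) : Fin (m' + 2))
                  = (s + 1 + Fin.castLE hle u) + 1 := by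
                apply Fin.ext
                rw [heeval, hval_u1, val_add_one', hR0]
                rcases Nat.lt_or_ge (s.val + 1 + u.val) (m' + 1) with hlt | hge
                · rw [if_neg (by omega : ¬ (s.val + 1 + u.val = m' + 1))]
                  have h2 : s.val + 1 + (u.val + 1) < m' + 2 := by omega
                  rw [Nat.mod_eq_of_lt h2]
                  omega
                · have heq : s.val + 1 + u.val = m' + 1 := by omega
                  rw [if_pos heq, show s.val + 1 + (u.val + 1) = m' + 2 from by omega,
                    Nat.mod_self]
              rw [hcast, ← hccF u]
              exact hrel _
            · have hu' : u.val = l' + 1 := by have := u.isLt; omega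
              have h1 : (u + 1 : Fin (l' + 1 + 1)) = 0 := by
                apply Fin.ext
                rw [val_add_one', if_pos hu']
                rfl
              have hz0 : (s + 1 + Fin.castLE hle u : Fin (m' + 2)) = 0 := by
                apply Fin.ext
                rw [heeval, hu', hlsum, Nat.mod_self]
                rfl
              have hz1 : (s + 1 + Fin.castLE hle (0 : Fin (l' + 1 + 1)) : Fin (m' + 2))
                  = s + 1 := by
                apply Fin.ext
                rw [heeval, Fin.val_zero, Nat.add_zero, Fin.val_add, Fin.val_one]
              rw [h1, hz0, hz1, hc0]
              have hG1 : G (c (s + 1)) = j2 := by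
                have h := hrel s
                rw [hs, hupd] at h
                exact h.symm
              rw [hG1]
          have hnd' : ∀ u : Fin (l' + 1 + 1),
              F (c (s + 1 + Fin.castLE hle u)) ≠ G (c (s + 1 + Fin.castLE hle u)) := by
            intro u h
            refine hnd (s + 1 + Fin.castLE hle u) ?_
            rw [hccF u]
            exact h
          exact walk_not_compatible (l' + 1) (fun u => c (s + 1 + Fin.castLE hle u))
            hccinj hrel' hnd' (hcompat _ _ (hsumj j1) (hsumj j2))
        · -- s is the last index : direct contradiction
          have hs' : s.val = m' + 1 := by have := s.isLt; omega
          have h3 : (s + 1 : Fin (m' + 2)) = 0 := by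
            apply Fin.ext
            rw [Fin.val_add, Fin.val_one, hs', Nat.mod_self]
            rfl
          have h := hrel s
          rw [hs, hupd, h3, hc0, ← hj3] at h
          exact hj32 h.symm
      · push_neg at hin
        have hfF : ∀ t, f' (c t) = F (c t) := by
          intro t
          rw [hf']
          exact Function.update_of_ne (hin t) j2 F
        refine walk_not_compatible m c hcinj ?_ ?_ (hcompat _ _ (hsumj j1) (hsumj j2))
        · intro t
          show F (c t) = G (c (t + 1))
          rw [← hfF t]
          exact hrel t
        · intro t
          show F (c t) ≠ G (c t)
          rw [← hfF t]
          exact hnd t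
    obtain ⟨j, hj⟩ := claim
    refine ⟨fun j' => v' j' + unitVec j j', hsumj j, ?_⟩
    funext j'
    have h := topePos_restrict (T (fun j' => v' j' + unitVec j j')) i0 j'
    have hp := congrFun (hpos _ (hsumj j)) j'
    rw [hp, hj] at h
    rcases eq_or_ne j j' with rfl | hne
    · have hu1 : unitVec j j = 1 := by simp [unitVec]
      rw [hu1, if_pos rfl] at h
      omega
    · have hu0 : unitVec j j' = 0 := by simp [unitVec, Ne.symm hne]
      rw [hu0, if_neg hne] at h
      omega
  · -- uniqueness
    intro v w hv hw heq
    by_contra hne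
    obtain ⟨i1, hi1⟩ := Function.ne_iff.1 hne
    have hcnt : ∀ j, cnt (T v ∘ i0.succAbove) j = cnt (T w ∘ i0.succAbove) j :=
      fun j => congrFun heq j
    obtain ⟨m, c, hcinj, -, hnd, hrel⟩ := exists_walk hcnt hi1
    exact walk_not_compatible m c hcinj hrel hnd (hcompat' v w hv hw)

end PartTwo

theorem statement11 {n d : ℕ}
    (T : (Fin (d + 2) → ℕ) → Fin (n + 2) → Fin (d + 2))
    (hpos : ∀ v : Fin (d + 2) → ℕ, (∑ j, v j) = n + 2 → topePos (T v) = v)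
    (hcompat : ∀ v v' : Fin (d + 2) → ℕ, (∑ j, v j) = n + 2 → (∑ j, v' j) = n + 2 →
      Compatible (topeGraph (T v)) (topeGraph (T v'))) :
    (∀ j0 : Fin (d + 2), ∃ T' : (Fin (d + 1) → ℕ) → Fin (n + 2) → Fin (d + 1),
      (∀ v' : Fin (d + 1) → ℕ, (∑ j, v' j) = n + 2 → topePos (T' v') = v') ∧
      (∀ v' w' : Fin (d + 1) → ℕ, (∑ j, v' j) = n + 2 → (∑ j, w' j) = n + 2 →
        Compatible (topeGraph (T' v')) (topeGraph (T' w'))) ∧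
      (∀ v : Fin (d + 2) → ℕ, (∑ j, v j) = n + 2 → v j0 = 0 →
        ∀ i, j0.succAbove (T' (v ∘ j0.succAbove) i) = T v i)) ∧
    (∀ i0 : Fin (n + 2),
      (∀ v' : Fin (d + 2) → ℕ, (∑ j, v' j) = n + 1 →
        ∃ v : Fin (d + 2) → ℕ, ((∑ j, v j) = n + 2) ∧
          topePos (T v ∘ i0.succAbove) = v') ∧
      (∀ v w : Fin (d + 2) → ℕ, (∑ j, v j) = n + 2 → (∑ j, w j) = n + 2 →
        topePos (T v ∘ i0.succAbove) = topePos (T w ∘ i0.succAbove) →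
        T v ∘ i0.succAbove = T w ∘ i0.succAbove) ∧
      (∀ v w : Fin (d + 2) → ℕ, (∑ j, v j) = n + 2 → (∑ j, w j) = n + 2 →
        Compatible (topeGraph (T v ∘ i0.succAbove))
          (topeGraph (T w ∘ i0.succAbove)))) := by
  exact ⟨fun j0 => part_one T hpos hcompat j0, fun i0 => part_two T hpos hcompat i0⟩
end
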